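/- arXiv:0709.1788 — 8 statements merged into one kernel-verified Lean document; each statement's English description precedes it below -/
import Mathlib

section
/- The maximum modulus M(r) = max_{|z|≤r} |S_q(z)| satisfies the bounds ∏_{j=1}^∞(1+rq^j) - ∏_{j=1}^∞(1-q^j) ≤ M(r) ≤ (∏_{j=0}^∞(1+rq^j))·∑_{k=1}^∞ q^k/(1-q^k) for 0 < q < 1. -/
open Finset Filter

noncomputable def qPoch (q x : ℂ) (k : ℕ) : ℂ := ∏ j ∈ Finset.range k, (1 - x * q ^ j)

noncomputable def Sq (q : ℝ) (x : ℂ) : ℂ :=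
  -∑' k : ℕ, ((q : ℂ) ^ (k + 1) / (1 - (q : ℂ) ^ (k + 1))) * qPoch q x (k + 1)

lemma multipliable_of_pos_of_summable_log (f : ℕ → ℝ) (hpos : ∀ n, 0 < f n)
    (h : Summable fun n => Real.log (f n)) : Multipliable f :=
  Real.multipliable_of_summable_log hpos h

theorem qlog_maximum_modulus_bounds (q r : ℝ) (hq0 : 0 < q) (hq1 : q < 1) (hr : 0 ≤ r) :
    (∏' j : ℕ, (1 + r * q ^ (j + 1))) - (∏' j : ℕ, (1 - q ^ (j + 1)))
      ≤ sSup ((fun z => ‖Sq q z‖) '' Metric.closedBall (0 : ℂ) r) ∧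
    sSup ((fun z => ‖Sq q z‖) '' Metric.closedBall (0 : ℂ) r)
      ≤ (∏' j : ℕ, (1 + r * q ^ j)) * ∑' k : ℕ, q ^ (k + 1) / (1 - q ^ (k + 1)) := by
  -- basic positivity facts
  have hq1k : ∀ k : ℕ, q ^ (k + 1) < 1 := fun k => pow_lt_one₀ hq0.le hq1 k.succ_ne_zero
  have hq1k' : ∀ k : ℕ, 0 < 1 - q ^ (k + 1) := fun k => sub_pos.2 (hq1k k)
  have hge : ∀ j : ℕ, (0:ℝ) < 1 + r * q ^ j := fun j => by nlinarith [pow_pos hq0 j]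
  -- abbreviations
  set s : ℕ → ℝ := fun k => q ^ (k + 1) / (1 - q ^ (k + 1)) with hs_def
  have hs_nonneg : ∀ k, 0 ≤ s k := fun k => div_nonneg (pow_nonneg hq0.le _) (hq1k' k).le
  -- s is summable
  have hs_le : ∀ k, s k ≤ q ^ k * (q / (1 - q)) := by
    intro k
    have h1 : q ^ (k + 1) ≤ q := by
      calc q ^ (k + 1) ≤ q ^ 1 := pow_le_pow_of_le_one hq0.le hq1.le (by omega)
        _ = q := pow_one q
    have h2 : 1 - q ≤ 1 - q ^ (k + 1) := by linarith
    have : q ^ (k + 1) / (1 - q ^ (k + 1)) ≤ q ^ (k + 1) / (1 - q) :=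
      div_le_div_of_nonneg_left (pow_nonneg hq0.le _) (by linarith) h2
    calc s k ≤ q ^ (k + 1) / (1 - q) := this
      _ = q ^ k * (q / (1 - q)) := by rw [pow_succ]; ring
  have hs_sum : Summable s :=
    Summable.of_nonneg_of_le hs_nonneg hs_le
      ((summable_geometric_of_lt_one hq0.le hq1).mul_right _)
  -- multipliability of the three products
  have hmul1 : Multipliable (fun j : ℕ => 1 + r * q ^ j) := by
    apply multipliable_of_pos_of_summable_log _ hge
    apply Summable.of_nonneg_of_le (fun j => Real.log_nonneg (by nlinarith [pow_pos hq0 j]))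
      (fun j => ?_) ((summable_geometric_of_lt_one hq0.le hq1).mul_left r)
    have := Real.log_le_sub_one_of_pos (hge j)
    linarith
  have hmul2 : Multipliable (fun j : ℕ => 1 + r * q ^ (j + 1)) := by
    apply multipliable_of_pos_of_summable_log _ (fun j => hge (j+1))
    apply Summable.of_nonneg_of_le (fun j => Real.log_nonneg (by nlinarith [pow_pos hq0 (j+1)]))
      (fun j => ?_)
      (((summable_geometric_of_lt_one hq0.le hq1).mul_left r).mul_right q)
    have := Real.log_le_sub_one_of_pos (hge (j+1))
    calc Real.log (1 + r * q ^ (j + 1)) ≤ r * q ^ (j + 1) := by linarith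
      _ = r * q ^ j * q := by rw [pow_succ]; ring
  have hmul3 : Multipliable (fun j : ℕ => 1 - q ^ (j + 1)) := by
    apply multipliable_of_pos_of_summable_log _ hq1k'
    apply Summable.of_abs
    apply Summable.of_nonneg_of_le (fun j => abs_nonneg _) (fun j => ?_)
      ((summable_geometric_of_lt_one hq0.le hq1).mul_right (q / (1 - q)))
    have hlog_le : Real.log (1 - q ^ (j + 1)) ≤ 0 :=
      Real.log_nonpos (hq1k' j).le (by nlinarith [pow_pos hq0 (j+1)])
    rw [abs_of_nonpos hlog_le, ← Real.log_inv]
    have hpos : (0:ℝ) < (1 - q ^ (j + 1))⁻¹ := inv_pos.2 (hq1k' j)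
    have := Real.log_le_sub_one_of_pos hpos
    have heq : (1 - q ^ (j + 1))⁻¹ - 1 = s j := by
      rw [hs_def]
      simp only
      rw [inv_eq_one_div, div_sub_one (hq1k' j).ne']
      ring_nf
    calc Real.log (1 - q ^ (j + 1))⁻¹ ≤ (1 - q ^ (j + 1))⁻¹ - 1 := by linarith
      _ = s j := heq
      _ ≤ q ^ j * (q / (1 - q)) := hs_le j
  -- partial products are bounded by the full product C
  set C : ℝ := ∏' j : ℕ, (1 + r * q ^ j) with hC_def
  have hPmono : Monotone (fun n => ∏ j ∈ range n, (1 + r * q ^ j)) := by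
    apply monotone_nat_of_le_succ
    intro n
    rw [prod_range_succ]
    have h0 : 0 ≤ ∏ j ∈ range n, (1 + r * q ^ j) := prod_nonneg (fun j _ => (hge j).le)
    exact le_mul_of_one_le_right h0 (by nlinarith [pow_pos hq0 n])
  have hP_le_C : ∀ n, ∏ j ∈ range n, (1 + r * q ^ j) ≤ C :=
    hPmono.ge_of_tendsto hmul1.hasProd.tendsto_prod_nat
  -- pointwise bound on ‖Sq q z‖
  have hpoch_bound : ∀ z : ℂ, ‖z‖ ≤ r → ∀ k, ‖qPoch q z k‖ ≤ ∏ j ∈ range k, (1 + r * q ^ j) := by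
    intro z hz k
    rw [qPoch, norm_prod]
    refine Finset.prod_le_prod (fun j _ => norm_nonneg _) (fun j _ => ?_)
    calc ‖1 - z * (q:ℂ) ^ j‖ ≤ ‖(1:ℂ)‖ + ‖z * (q:ℂ) ^ j‖ := norm_sub_le _ _
      _ = 1 + ‖z‖ * q ^ j := by
          rw [norm_one, norm_mul, norm_pow, Complex.norm_real, Real.norm_eq_abs, abs_of_pos hq0]
      _ ≤ 1 + r * q ^ j := by nlinarith [pow_pos hq0 j, norm_nonneg z]
  have hcast : ∀ k : ℕ, ((q:ℂ) ^ (k + 1) / (1 - (q:ℂ) ^ (k + 1))) = ((s k : ℝ) : ℂ) := by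
    intro k
    rw [hs_def]
    push_cast
    ring
  have hnorm_bound : ∀ z : ℂ, ‖z‖ ≤ r → ‖Sq q z‖ ≤ (∑' k, s k) * C := by
    intro z hz
    rw [Sq, norm_neg]
    apply tsum_of_norm_bounded (hs_sum.hasSum.mul_right C)
    intro k
    rw [norm_mul, hcast k, Complex.norm_real, Real.norm_eq_abs, abs_of_nonneg (hs_nonneg k)]
    have h1 := hpoch_bound z hz (k + 1)
    have h2 := hP_le_C (k + 1)
    have := norm_nonneg (qPoch q z (k + 1))
    nlinarith [hs_nonneg k]
  -- the set and its properties
  set S : Set ℝ := (fun z => ‖Sq q z‖) '' Metric.closedBall (0 : ℂ) r with hS_def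
  have hSne : S.Nonempty := ⟨‖Sq q 0‖, ⟨0, Metric.mem_closedBall_self hr, rfl⟩⟩
  have hSbdd : BddAbove S := by
    refine ⟨(∑' k, s k) * C, ?_⟩
    rintro x ⟨z, hz, rfl⟩
    exact hnorm_bound z (by simpa [Metric.mem_closedBall, Complex.dist_eq] using hz)
  constructor
  · -- lower bound
    -- the value at z = -r
    set t : ℕ → ℝ := fun k => s k * ∏ j ∈ range (k + 1), (1 + r * q ^ j) with ht_def
    have ht_nonneg : ∀ k, 0 ≤ t k :=
      fun k => mul_nonneg (hs_nonneg k) (prod_nonneg (fun j _ => (hge j).le))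
    have ht_sum : Summable t := by
      apply Summable.of_nonneg_of_le ht_nonneg (fun k => ?_) (hs_sum.mul_right C)
      exact mul_le_mul_of_nonneg_left (hP_le_C (k + 1)) (hs_nonneg k)
    have hmem : ((-r : ℝ) : ℂ) ∈ Metric.closedBall (0:ℂ) r := by
      simp [Metric.mem_closedBall, Complex.dist_eq, abs_of_nonneg hr]
    have hval : ‖Sq q ((-r : ℝ) : ℂ)‖ = ∑' k, t k := by
      have hpoch : ∀ k, qPoch q ((-r : ℝ) : ℂ) k
          = ((∏ j ∈ range k, (1 + r * q ^ j) : ℝ) : ℂ) := by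
        intro k
        rw [qPoch]
        push_cast
        exact Finset.prod_congr rfl fun j _ => by ring
      have hterm : ∀ k : ℕ, ((q:ℂ) ^ (k + 1) / (1 - (q:ℂ) ^ (k + 1)))
          * qPoch q ((-r : ℝ) : ℂ) (k + 1) = ((t k : ℝ) : ℂ) := by
        intro k
        rw [hcast k, hpoch (k + 1), ht_def, ← Complex.ofReal_mul]
      rw [Sq, norm_neg, tsum_congr hterm, ← Complex.ofReal_tsum, Complex.norm_real,
        Real.norm_eq_abs, abs_of_nonneg (tsum_nonneg ht_nonneg)]
    -- telescoping inequality for partial products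
    have hkey : ∀ N : ℕ,
        (∏ j ∈ range N, (1 + r * q ^ (j + 1))) - (∏ j ∈ range N, (1 - q ^ (j + 1)))
          ≤ ∑ k ∈ range N, t k := by
      intro N
      induction N with
      | zero => simp
      | succ N ih =>
        rw [prod_range_succ, prod_range_succ, sum_range_succ]
        have hA0 : 0 ≤ ∏ j ∈ range N, (1 + r * q ^ (j + 1)) :=
          prod_nonneg (fun j _ => (hge (j + 1)).le)
        have hBA : (∏ j ∈ range N, (1 - q ^ (j + 1))) ≤ ∏ j ∈ range N, (1 + r * q ^ (j + 1)) :=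
          Finset.prod_le_prod (fun j _ => (hq1k' j).le)
            (fun j _ => by nlinarith [pow_pos hq0 (j + 1)])
        have htN : (r + 1) * q ^ (N + 1) * ∏ j ∈ range N, (1 + r * q ^ (j + 1)) ≤ t N := by
          have hprod : ∏ j ∈ range (N + 1), (1 + r * q ^ j)
              = (∏ j ∈ range N, (1 + r * q ^ (j + 1))) * (1 + r * q ^ 0) :=
            Finset.prod_range_succ' _ _
          rw [ht_def]
          simp only
          rw [hprod]
          have h1 : q ^ (N + 1) ≤ s N := by
            rw [hs_def]
            simp only
            rw [le_div_iff₀ (hq1k' N)]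
            nlinarith [pow_pos hq0 (N + 1), pow_nonneg hq0.le (N + 1)]
          have h2 : (0:ℝ) < 1 + r * q ^ 0 := hge 0
          simp only [pow_zero, mul_one] at h2 ⊢
          nlinarith [mul_le_mul_of_nonneg_right h1 (mul_nonneg hA0 h2.le)]
        nlinarith [pow_pos hq0 (N + 1),
          mul_le_mul_of_nonneg_right hBA (pow_nonneg hq0.le (N + 1))]
    have hlim : Tendsto (fun N =>
        (∏ j ∈ range N, (1 + r * q ^ (j + 1))) - (∏ j ∈ range N, (1 - q ^ (j + 1))))
        atTop (nhds ((∏' j : ℕ, (1 + r * q ^ (j + 1))) - (∏' j : ℕ, (1 - q ^ (j + 1))))) :=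
      (hmul2.hasProd.tendsto_prod_nat).sub (hmul3.hasProd.tendsto_prod_nat)
    have hdiff_le : (∏' j : ℕ, (1 + r * q ^ (j + 1))) - (∏' j : ℕ, (1 - q ^ (j + 1)))
        ≤ ∑' k, t k := by
      refine le_of_tendsto' hlim (fun N => (hkey N).trans ?_)
      exact Summable.sum_le_tsum (range N) (fun k _ => ht_nonneg k) ht_sum
    calc (∏' j : ℕ, (1 + r * q ^ (j + 1))) - (∏' j : ℕ, (1 - q ^ (j + 1)))
        ≤ ∑' k, t k := hdiff_le
      _ = ‖Sq q ((-r : ℝ) : ℂ)‖ := hval.symm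
      _ ≤ sSup S := le_csSup hSbdd ⟨((-r : ℝ) : ℂ), hmem, rfl⟩
  · -- upper bound
    refine csSup_le hSne ?_
    rintro x ⟨z, hz, rfl⟩
    have := hnorm_bound z (by simpa [Metric.mem_closedBall, Complex.dist_eq] using hz)
    rw [mul_comm] at this
    exact this
end

section
/- The q-logarithm S_q has the Taylor expansion S_q(x) = -∑_{k=1}^∞ (q^k/(1-q^k))·(1 + q^{k(k-1)/2}·(-x)^k/(q;q)_k), valid for all x ∈ ℂ, where 0 < q < 1. -/
open Finset
namespace QLog
noncomputable def P (q : ℝ) (n : ℕ) : ℝ := ∏ j ∈ range n, (1 - q ^ (j+1))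
def T (n : ℕ) : ℕ := ∑ i ∈ range n, i
noncomputable def cf (q : ℝ) (m j : ℕ) : ℂ :=
  if j ≤ m then (-1)^j * (q:ℂ)^(T j) * ((P q m : ℝ) : ℂ) / (((P q j : ℝ):ℂ) * ((P q (m - j) : ℝ):ℂ)) else 0
variable {q : ℝ}
lemma opp (hq0 : 0 < q) (hq1 : q < 1) (n : ℕ) : 0 < 1 - q ^ (n+1) := by
  have : q ^ (n+1) < 1 := pow_lt_one₀ hq0.le hq1 (Nat.succ_ne_zero n)
  linarith
lemma P_pos (hq0 : 0 < q) (hq1 : q < 1) (n : ℕ) : 0 < P q n :=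
  Finset.prod_pos fun j _ => opp hq0 hq1 j
lemma P_ne (hq0 : 0 < q) (hq1 : q < 1) (n : ℕ) : ((P q n : ℝ):ℂ) ≠ 0 := by
  exact_mod_cast (P_pos hq0 hq1 n).ne'
lemma P_succ (n : ℕ) : P q (n+1) = P q n * (1 - q ^ (n+1)) := Finset.prod_range_succ _ _
lemma oppC (hq0 : 0 < q) (hq1 : q < 1) (n : ℕ) : (1 - (q:ℂ) ^ (n+1)) ≠ 0 := by
  have : ((1 - q ^ (n+1) : ℝ) : ℂ) ≠ 0 := by exact_mod_cast (opp hq0 hq1 n).ne'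
  simpa using this
lemma T_succ (n : ℕ) : T (n+1) = T n + n := Finset.sum_range_succ _ _
lemma P_zero : P q 0 = 1 := rfl
lemma T_zero : T 0 = 0 := rfl

lemma cf_zero (hq0 : 0 < q) (hq1 : q < 1) (m : ℕ) : cf q m 0 = 1 := by
  simp [cf, T_zero, P_zero, div_self, P_ne hq0 hq1 m]

lemma cf_diag (hq0 : 0 < q) (hq1 : q < 1) (m : ℕ) : cf q m m = (-1)^m * (q:ℂ)^(T m) := by
  rw [cf, if_pos le_rfl, Nat.sub_self, P_zero]
  push_cast
  field_simp [P_ne hq0 hq1 m]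

lemma cf_step (hq0 : 0 < q) (hq1 : q < 1) (m j : ℕ) (hj : j ≤ m) :
    cf q (m+1) (j+1) = cf q m (j+1) - (q:ℂ)^m * cf q m j := by
  rcases eq_or_lt_of_le hj with rfl | hlt
  · have h0 : cf q j (j+1) = 0 := by rw [cf, if_neg (by omega)]
    rw [h0, cf_diag hq0 hq1, cf_diag hq0 hq1, T_succ, pow_add, pow_succ]
    ring
  · obtain ⟨i, rfl⟩ : ∃ i, m = j + i + 1 := ⟨m - j - 1, by omega⟩
    simp only [cf]
    rw [if_pos (by omega : j+1 ≤ j+i+1+1), if_pos (by omega : j+1 ≤ j+i+1), if_pos (by omega : j ≤ j+i+1)]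
    simp only [show j + i + 1 + 1 - (j+1) = i + 1 from by omega,
      show j + i + 1 - (j + 1) = i from by omega, show j + i + 1 - j = i + 1 from by omega]
    rw [show j + i + 1 + 1 = (j + i + 1) + 1 from rfl, P_succ (n := j + i + 1), P_succ (n := i), P_succ (n := j), T_succ]
    push_cast
    have h1 := P_ne hq0 hq1 (j+i+1); have h2 := P_ne hq0 hq1 i; have h3 := P_ne hq0 hq1 j
    have h4 := oppC hq0 hq1 i; have h5 := oppC hq0 hq1 j; have h6 := oppC hq0 hq1 (j+i+1)
    field_simp
    ring
end QLog

namespace QLog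
variable {q : ℝ}
lemma qbinom (hq0 : 0 < q) (hq1 : q < 1) (x : ℂ) (m : ℕ) :
    qPoch q x m = ∑ j ∈ range (m+1), cf q m j * x^j := by
  induction m with
  | zero => simp [qPoch, cf_zero hq0 hq1]
  | succ m ih =>
    have h1 : qPoch q x (m+1) = qPoch q x m * (1 - x * (q:ℂ)^m) := Finset.prod_range_succ _ _
    rw [h1, ih]
    have expand : (∑ j ∈ range (m+1), cf q m j * x^j) * (1 - x*(q:ℂ)^m)
        = (∑ j ∈ range (m+1), cf q m j * x^j) - ∑ j ∈ range (m+1), ((q:ℂ)^m * cf q m j) * x^(j+1) := by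
      simp only [mul_sub, mul_one, Finset.sum_mul, ← Finset.sum_sub_distrib]
      exact Finset.sum_congr rfl fun j _ => by ring
    rw [expand]
    rw [Finset.sum_range_succ' (fun j => cf q (m+1) j * x^j) (m+1),
        Finset.sum_range_succ' (fun j => cf q m j * x^j) m]
    have hext : ∑ j ∈ range m, cf q m (j+1) * x^(j+1)
        = ∑ j ∈ range (m+1), cf q m (j+1) * x^(j+1) := by
      rw [Finset.sum_range_succ]
      have : cf q m (m+1) = 0 := by rw [cf, if_neg (by omega)]
      simp [this]
    simp only [pow_zero, mul_one, cf_zero hq0 hq1]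
    rw [hext]
    have key : ∑ k ∈ range (m+1), cf q (m+1) (k+1) * x^(k+1)
        = ∑ j ∈ range (m+1), (cf q m (j+1) * x^(j+1) - (q:ℂ)^m * cf q m j * x^(j+1)) := by
      refine Finset.sum_congr rfl fun j hj => ?_
      rw [cf_step hq0 hq1 m j (Nat.lt_succ_iff.mp (Finset.mem_range.mp hj))]
      ring
    rw [key, Finset.sum_sub_distrib]
    ring
end QLog

namespace QLog
variable {q : ℝ}

noncomputable def aa (q : ℝ) (n : ℕ) : ℂ := (q:ℂ)^n / (1 - (q:ℂ)^n)
noncomputable def tt (q : ℝ) (n : ℕ) : ℂ := aa q n * (-1)^n * (q:ℂ)^(T n) / ((P q n : ℝ):ℂ)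

lemma key_top (hq0 : 0 < q) (hq1 : q < 1) (M : ℕ) :
    tt q (M+1) * (((P q (M+1) :ℝ):ℂ) / ((P q 0 :ℝ):ℂ)) = aa q (M+1) * cf q (M+1) (M+1) := by
  rw [tt, cf_diag hq0 hq1, P_zero]
  push_cast
  field_simp [P_ne hq0 hq1 (M+1)]

lemma key_step (hq0 : 0 < q) (hq1 : q < 1) (M j : ℕ) (hj : j < M) :
    tt q (j+1) * (((P q (M+1) :ℝ):ℂ) / ((P q (M-j) :ℝ):ℂ) - ((P q M :ℝ):ℂ) / ((P q (M-1-j) :ℝ):ℂ))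
      = aa q (M+1) * cf q (M+1) (j+1) := by
  obtain ⟨i, rfl⟩ : ∃ i, M = j + i + 1 := ⟨M - j - 1, by omega⟩
  rw [tt, aa, aa, cf, if_pos (by omega : j + 1 ≤ j + i + 1 + 1)]
  simp only [show j + i + 1 - j = i + 1 from by omega, show j + i + 1 - 1 - j = i from by omega,
    show j + i + 1 + 1 - (j+1) = i + 1 from by omega,
    show j + i + 1 + 1 = (j + i + 1) + 1 from rfl]
  rw [P_succ (n := j + i + 1), P_succ (n := i), T_succ]
  push_cast
  have h1 := P_ne hq0 hq1 (j+i+1); have h2 := P_ne hq0 hq1 i; have h3 := P_ne hq0 hq1 (j+1)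
  have h4 := oppC hq0 hq1 i; have h5 := oppC hq0 hq1 j; have h6 := oppC hq0 hq1 (j+i+1)
  field_simp
  ring

lemma key (hq0 : 0 < q) (hq1 : q < 1) (x : ℂ) (M : ℕ) :
    ∑ m ∈ range M, aa q (m+1) * qPoch q x (m+1)
      = ∑ m ∈ range M, aa q (m+1)
        + ∑ j ∈ range M, x^(j+1) * tt q (j+1) * (((P q M :ℝ):ℂ) / ((P q (M-1-j) :ℝ):ℂ)) := by
  induction M with
  | zero => simp
  | succ M ih =>
    rw [Finset.sum_range_succ, ih, qbinom hq0 hq1 x (M+1)]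
    rw [Finset.sum_range_succ (f := fun m => aa q (m+1)),
        Finset.sum_range_succ (f := fun j => x^(j+1) * tt q (j+1) * (((P q (M+1) :ℝ):ℂ) / ((P q (M+1-1-j) :ℝ):ℂ)))]
    simp only [show ∀ j : ℕ, M + 1 - 1 - j = M - j from fun j => by omega]
    rw [Finset.sum_range_succ' (fun j => cf q (M+1) j * x^j) (M+1)]
    simp only [pow_zero, mul_one, cf_zero hq0 hq1]
    rw [Nat.sub_self M, mul_add, mul_one]
    have hmain : aa q (M+1) * ∑ k ∈ range (M+1), cf q (M+1) (k+1) * x^(k+1)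
        = (∑ j ∈ range M, x^(j+1) * tt q (j+1) * (((P q (M+1) :ℝ):ℂ) / ((P q (M-j) :ℝ):ℂ))
            + x^(M+1) * tt q (M+1) * (((P q (M+1) :ℝ):ℂ) / ((P q 0 :ℝ):ℂ)))
          - ∑ j ∈ range M, x^(j+1) * tt q (j+1) * (((P q M :ℝ):ℂ) / ((P q (M-1-j) :ℝ):ℂ)) := by
      rw [Finset.mul_sum, Finset.sum_range_succ]
      have htop : aa q (M+1) * (cf q (M+1) (M+1) * x^(M+1))
          = x^(M+1) * tt q (M+1) * (((P q (M+1) :ℝ):ℂ) / ((P q 0 :ℝ):ℂ)) := by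
        linear_combination (-x^(M+1)) * key_top hq0 hq1 M
      rw [htop]
      have hmid : ∑ k ∈ range M, aa q (M+1) * (cf q (M+1) (k+1) * x^(k+1))
          = ∑ j ∈ range M, (x^(j+1) * tt q (j+1) * (((P q (M+1) :ℝ):ℂ) / ((P q (M-j) :ℝ):ℂ))
              - x^(j+1) * tt q (j+1) * (((P q M :ℝ):ℂ) / ((P q (M-1-j) :ℝ):ℂ))) := by
        refine Finset.sum_congr rfl fun j hj => ?_
        linear_combination (-x^(j+1)) * key_step hq0 hq1 M j (Finset.mem_range.mp hj)
      rw [hmid, Finset.sum_sub_distrib]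
      ring
    linear_combination hmain
end QLog

namespace QLog
variable {q : ℝ}

lemma aa_norm (hq0 : 0 < q) (hq1 : q < 1) (n : ℕ) :
    ‖aa q (n+1)‖ ≤ q^(n+1) / (1-q) := by
  have h : aa q (n+1) = (((q^(n+1) / (1 - q^(n+1)) : ℝ)):ℂ) := by
    rw [aa]; push_cast; ring
  rw [h, Complex.norm_real, Real.norm_eq_abs,
    abs_of_nonneg (div_nonneg (pow_pos hq0 _).le (opp hq0 hq1 n).le)]
  apply div_le_div_of_nonneg_left (pow_pos hq0 _).le ?_ ?_ |>.trans_eq rfl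
  · linarith
  · have := pow_le_pow_of_le_one hq0.le hq1.le (Nat.one_le_iff_ne_zero.mpr (Nat.succ_ne_zero n))
    simp at this
    linarith [this]

lemma geom_sum_bound (hq0 : 0 < q) (hq1 : q < 1) (n : ℕ) :
    ∑ i ∈ range n, q^i ≤ (1-q)⁻¹ := by
  rw [geom_sum_eq (by linarith : q ≠ 1)]
  have h : (q^n - 1)/(q-1) = (1-q^n)/(1-q) := by
    rw [div_eq_div_iff (by linarith) (by linarith)]; ring
  rw [h, inv_eq_one_div]
  gcongr
  · nlinarith [pow_pos hq0 n]

lemma qPoch_norm_bound (hq0 : 0 < q) (hq1 : q < 1) (x : ℂ) (n : ℕ) :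
    ‖qPoch q x n‖ ≤ Real.exp (‖x‖ * (1-q)⁻¹) := by
  rw [qPoch, norm_prod]
  calc ∏ j ∈ range n, ‖1 - x * (q:ℂ)^j‖ ≤ ∏ j ∈ range n, Real.exp (‖x‖ * q^j) := by
        refine Finset.prod_le_prod (fun j _ => norm_nonneg _) (fun j _ => ?_)
        calc ‖1 - x * (q:ℂ)^j‖ ≤ ‖(1:ℂ)‖ + ‖x * (q:ℂ)^j‖ := norm_sub_le _ _
          _ = 1 + ‖x‖ * q^j := by
              rw [norm_one, norm_mul, norm_pow, Complex.norm_real, Real.norm_eq_abs,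
                abs_of_pos hq0]
          _ ≤ Real.exp (‖x‖ * q^j) := by
              have := Real.add_one_le_exp (‖x‖ * q^j); linarith
    _ = Real.exp (∑ j ∈ range n, ‖x‖ * q^j) := by rw [Real.exp_sum]
    _ ≤ Real.exp (‖x‖ * (1-q)⁻¹) := by
        apply Real.exp_le_exp.mpr
        rw [← Finset.mul_sum]
        exact mul_le_mul_of_nonneg_left (geom_sum_bound hq0 hq1 n) (norm_nonneg x)
end QLog

namespace QLog
variable {q : ℝ}

lemma summable_A (hq0 : 0 < q) (hq1 : q < 1) (x : ℂ) :
    Summable (fun m => aa q (m+1) * qPoch q x (m+1)) := by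
  apply Summable.of_norm_bounded
    (g := fun m => (q * (1-q)⁻¹ * Real.exp (‖x‖ * (1-q)⁻¹)) * q^m)
    (((summable_geometric_of_lt_one hq0.le hq1)).mul_left _)
  intro m
  rw [norm_mul]
  have h1 := aa_norm hq0 hq1 m
  have h2 := qPoch_norm_bound hq0 hq1 x (m+1)
  have h3 : (0:ℝ) ≤ ‖aa q (m+1)‖ := norm_nonneg _
  have h4 : (0:ℝ) < Real.exp (‖x‖ * (1-q)⁻¹) := Real.exp_pos _
  calc ‖aa q (m+1)‖ * ‖qPoch (q:ℂ) x (m+1)‖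
      ≤ (q^(m+1)/(1-q)) * Real.exp (‖x‖ * (1-q)⁻¹) := by
        apply mul_le_mul h1 h2 (norm_nonneg _)
        exact div_nonneg (pow_pos hq0 _).le (by linarith)
    _ = (q * (1-q)⁻¹ * Real.exp (‖x‖ * (1-q)⁻¹)) * q^m := by
        rw [pow_succ]; field_simp

lemma summable_a (hq0 : 0 < q) (hq1 : q < 1) :
    Summable (fun m => aa q (m+1)) := by
  apply Summable.of_norm_bounded (g := fun m => (q * (1-q)⁻¹) * q^m)
    (((summable_geometric_of_lt_one hq0.le hq1)).mul_left _)
  intro m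
  calc ‖aa q (m+1)‖ ≤ q^(m+1)/(1-q) := aa_norm hq0 hq1 m
    _ = (q * (1-q)⁻¹) * q^m := by rw [pow_succ]; field_simp

noncomputable def vv (q : ℝ) (x : ℂ) (j : ℕ) : ℝ := q^(T (j+1)) * ‖x‖^(j+1) / P q (j+1)

lemma vv_nonneg (hq0 : 0 < q) (hq1 : q < 1) (x : ℂ) (j : ℕ) : 0 ≤ vv q x j := by
  unfold vv
  exact div_nonneg (by positivity) (P_pos hq0 hq1 _).le

lemma vv_succ (j : ℕ) (x : ℂ) : vv q x (j+1) = vv q x j * (q^(j+1) * ‖x‖ / (1 - q^(j+2))) := by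
  unfold vv
  rw [T_succ (j+1), P_succ (n := j+1), pow_add, pow_succ (n := j+1)]
  field_simp

lemma summable_vv (hq0 : 0 < q) (hq1 : q < 1) (x : ℂ) : Summable (vv q x) := by
  apply summable_of_ratio_norm_eventually_le (r := 1/2) (by norm_num)
  have hev : ∀ᶠ j in Filter.atTop, q^(j+1) * ‖x‖ < (1-q)/2 := by
    have h0 : (0:ℝ) < ((1-q)/2) / (‖x‖ + 1) := by
      apply div_pos (by linarith) (by positivity)
    have := (tendsto_pow_atTop_nhds_zero_of_lt_one hq0.le hq1).eventually
      (eventually_lt_nhds h0)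
    filter_upwards [this] with j hj
    calc q^(j+1) * ‖x‖ ≤ q^j * ‖x‖ := by
          apply mul_le_mul_of_nonneg_right _ (norm_nonneg x)
          exact pow_le_pow_of_le_one hq0.le hq1.le (Nat.le_succ j)
      _ ≤ q^j * (‖x‖ + 1) := by nlinarith [pow_pos hq0 j, norm_nonneg x]
      _ < ((1-q)/2) / (‖x‖ + 1) * (‖x‖ + 1) := by
          apply mul_lt_mul_of_pos_right hj
          nlinarith [norm_nonneg x]
      _ = (1-q)/2 := by field_simp
  filter_upwards [hev] with j hj
  rw [Real.norm_eq_abs, Real.norm_eq_abs, abs_of_nonneg (vv_nonneg hq0 hq1 x _),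
    abs_of_nonneg (vv_nonneg hq0 hq1 x _), vv_succ]
  have hv := vv_nonneg hq0 hq1 x j
  have hd : (0:ℝ) < 1 - q^(j+2) := opp hq0 hq1 (j+1)
  have hq2 : q^(j+2) ≤ q := pow_le_of_le_one hq0.le hq1.le (by omega)
  have : q^(j+1) * ‖x‖ / (1 - q^(j+2)) ≤ 1/2 := by
    rw [div_le_iff₀ hd]
    nlinarith [pow_pos hq0 (j+2)]
  calc vv q x j * (q^(j+1) * ‖x‖ / (1 - q^(j+2))) ≤ vv q x j * (1/2) :=
        mul_le_mul_of_nonneg_left this hv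
    _ = 1/2 * vv q x j := by ring

lemma tt_norm (hq0 : 0 < q) (hq1 : q < 1) (x : ℂ) (j : ℕ) :
    ‖x^(j+1) * tt q (j+1)‖ ≤ (1-q)⁻¹ * vv q x j := by
  rw [norm_mul, tt, norm_div, norm_mul, norm_mul]
  have heq : ‖aa q (j+1)‖ * ‖((-1:ℂ))^(j+1)‖ * ‖((q:ℂ))^(T (j+1))‖ = ‖aa q (j+1)‖ * q^(T (j+1)) := by
    rw [norm_pow, norm_pow, norm_neg, norm_one, one_pow, Complex.norm_real, Real.norm_eq_abs,
      abs_of_pos hq0]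
    ring
  rw [heq, norm_pow]
  rw [Complex.norm_real, Real.norm_eq_abs, abs_of_pos (P_pos hq0 hq1 (j+1))]
  unfold vv
  have hP := P_pos hq0 hq1 (j+1)
  have haa : ‖aa q (j+1)‖ ≤ (1-q)⁻¹ := by
    refine (aa_norm hq0 hq1 j).trans ?_
    rw [inv_eq_one_div]
    gcongr
    · exact pow_le_one₀ hq0.le hq1.le
  have hc : (0:ℝ) ≤ ‖x‖^(j+1) * q^(T (j+1)) / P q (j+1) := by
    apply div_nonneg (by positivity) hP.le
  calc ‖x‖^(j+1) * (‖aa q (j+1)‖ * q^(T (j+1)) / P q (j+1))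
      = (‖x‖^(j+1) * q^(T (j+1)) / P q (j+1)) * ‖aa q (j+1)‖ := by ring
    _ ≤ (‖x‖^(j+1) * q^(T (j+1)) / P q (j+1)) * (1-q)⁻¹ :=
        mul_le_mul_of_nonneg_left haa hc
    _ = (1-q)⁻¹ * (q ^ T (j+1) * ‖x‖ ^ (j + 1) / P q (j+1)) := by ring

lemma summable_xt (hq0 : 0 < q) (hq1 : q < 1) (x : ℂ) :
    Summable (fun j => x^(j+1) * tt q (j+1)) :=
  Summable.of_norm_bounded ((summable_vv hq0 hq1 x).mul_left _) (tt_norm hq0 hq1 x)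

end QLog

namespace QLog
variable {q : ℝ}

lemma weier (f : ℕ → ℝ) (h0 : ∀ i, 0 ≤ f i) (h1 : ∀ i, f i ≤ 1) (n : ℕ) :
    1 - ∑ i ∈ range n, f i ≤ ∏ i ∈ range n, (1 - f i) := by
  induction n with
  | zero => simp
  | succ n ih =>
    rw [Finset.prod_range_succ, Finset.sum_range_succ]
    have hp0 : (0:ℝ) ≤ ∏ i ∈ range n, (1 - f i) :=
      Finset.prod_nonneg fun i _ => by linarith [h1 i]
    have hp1 : ∏ i ∈ range n, (1 - f i) ≤ 1 := by
      apply Finset.prod_le_one (fun i _ => by linarith [h1 i]) (fun i _ => by linarith [h0 i])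
    nlinarith [h0 n, h1 n]

lemma ratio_bound (hq0 : 0 < q) (hq1 : q < 1) (k n : ℕ) :
    |P q (k+n) / P q k - 1| ≤ q^(k+1) * (1-q)⁻¹ := by
  have hPk := P_pos hq0 hq1 k
  have hsplit : P q (k+n) = P q k * ∏ i ∈ range n, (1 - q^(k+i+1)) :=
    Finset.prod_range_add (fun j => 1 - q^(j+1)) k n
  have hratio : P q (k+n) / P q k = ∏ i ∈ range n, (1 - q^(k+i+1)) := by
    rw [hsplit, mul_comm, mul_div_assoc, div_self hPk.ne', mul_one]
  have hub : ∏ i ∈ range n, (1 - q^(k+i+1)) ≤ 1 :=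
    Finset.prod_le_one (fun i _ => (opp hq0 hq1 (k+i)).le)
      (fun i _ => by nlinarith [pow_pos hq0 (k+i+1)])
  have hlb : 1 - q^(k+1) * (1-q)⁻¹ ≤ ∏ i ∈ range n, (1 - q^(k+i+1)) := by
    refine le_trans ?_ (weier (fun i => q^(k+i+1)) (fun i => (pow_pos hq0 _).le)
      (fun i => (pow_lt_one₀ hq0.le hq1 (Nat.succ_ne_zero _)).le) n)
    have hsum : ∑ i ∈ range n, q^(k+i+1) ≤ q^(k+1) * (1-q)⁻¹ := by
      have : ∑ i ∈ range n, q^(k+i+1) = q^(k+1) * ∑ i ∈ range n, q^i := by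
        rw [Finset.mul_sum]
        exact Finset.sum_congr rfl fun i _ => by rw [← pow_add]; congr 1; omega
      rw [this]
      exact mul_le_mul_of_nonneg_left (geom_sum_bound hq0 hq1 n) (pow_pos hq0 _).le
    linarith
  rw [hratio, abs_le]
  constructor <;> [linarith; nlinarith [pow_pos hq0 (k+1), inv_nonneg.mpr (by linarith : (0:ℝ) ≤ 1-q)]]
end QLog

namespace QLog
variable {q : ℝ}

lemma vv_div (hq0 : 0 < q) (hq1 : q < 1) (x : ℂ) (j : ℕ) :
    vv q (x / (q:ℂ)) j = vv q x j / q^(j+1) := by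
  unfold vv
  rw [norm_div, Complex.norm_real, Real.norm_eq_abs, abs_of_pos hq0, div_pow]
  have hP := (P_pos hq0 hq1 (j+1)).ne'
  have hqp : q^(j+1) ≠ 0 := (pow_pos hq0 _).ne'
  ring

noncomputable def EE (q : ℝ) (x : ℂ) (M : ℕ) : ℂ :=
  ∑ j ∈ range M, x^(j+1) * tt q (j+1) * (((P q M / P q (M-1-j) : ℝ) : ℂ) - 1)

lemma EE_bound (hq0 : 0 < q) (hq1 : q < 1) (x : ℂ) (M : ℕ) :
    ‖EE q x M‖ ≤ (1-q)⁻¹ * (1-q)⁻¹ * (∑' j, vv q (x/(q:ℂ)) j) * q^(M+1) := by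
  have hsv := summable_vv hq0 hq1 (x/(q:ℂ))
  have hnn := vv_nonneg hq0 hq1 (x/(q:ℂ))
  calc ‖EE q x M‖ ≤ ∑ j ∈ range M, ‖x^(j+1) * tt q (j+1) * (((P q M / P q (M-1-j) : ℝ) : ℂ) - 1)‖ :=
        norm_sum_le _ _
    _ ≤ ∑ j ∈ range M, (1-q)⁻¹ * (1-q)⁻¹ * q^(M+1) * vv q (x/(q:ℂ)) j := by
        refine Finset.sum_le_sum fun j hj => ?_
        have hjM := Finset.mem_range.mp hj
        rw [norm_mul]
        have hr : ‖(((P q M / P q (M-1-j) : ℝ) : ℂ) - 1)‖ ≤ q^(M-j) * (1-q)⁻¹ := by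
          rw [show ((1:ℂ)) = ((1:ℝ):ℂ) from by norm_num, ← Complex.ofReal_sub, Complex.norm_real,
            Real.norm_eq_abs]
          have := ratio_bound hq0 hq1 (M-1-j) (j+1)
          rw [show M-1-j+(j+1) = M from by omega, show M-1-j+1 = M-j from by omega] at this
          exact this
        have hxt := tt_norm hq0 hq1 x j
        calc ‖x^(j+1) * tt q (j+1)‖ * ‖(((P q M / P q (M-1-j) : ℝ) : ℂ) - 1)‖
            ≤ ((1-q)⁻¹ * vv q x j) * (q^(M-j) * (1-q)⁻¹) := by
              apply mul_le_mul hxt hr (norm_nonneg _)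
              exact mul_nonneg (inv_nonneg.mpr (by linarith)) (vv_nonneg hq0 hq1 x j)
          _ = (1-q)⁻¹ * (1-q)⁻¹ * q^(M+1) * vv q (x/(q:ℂ)) j := by
              rw [vv_div hq0 hq1 x j]
              have hpow : q^(M+1) / q^(j+1) = q^(M-j) := by
                rw [eq_comm, eq_div_iff (pow_pos hq0 (j+1)).ne', ← pow_add]
                congr 1; omega
              rw [← hpow]
              have hqp : q^(j+1) ≠ 0 := (pow_pos hq0 _).ne'
              field_simp
    _ = (1-q)⁻¹ * (1-q)⁻¹ * q^(M+1) * ∑ j ∈ range M, vv q (x/(q:ℂ)) j := by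
        rw [Finset.mul_sum]
    _ ≤ (1-q)⁻¹ * (1-q)⁻¹ * (∑' j, vv q (x/(q:ℂ)) j) * q^(M+1) := by
        rw [show (1-q)⁻¹ * (1-q)⁻¹ * (∑' j, vv q (x/(q:ℂ)) j) * q^(M+1)
            = (1-q)⁻¹ * (1-q)⁻¹ * q^(M+1) * (∑' j, vv q (x/(q:ℂ)) j) from by ring]
        apply mul_le_mul_of_nonneg_left (Summable.sum_le_tsum _ (fun i _ => hnn i) hsv)
        have : (0:ℝ) ≤ (1-q)⁻¹ := inv_nonneg.mpr (by linarith)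
        positivity
end QLog

namespace QLog
variable {q : ℝ}

lemma tendsto_EE (hq0 : 0 < q) (hq1 : q < 1) (x : ℂ) :
    Filter.Tendsto (EE q x) Filter.atTop (nhds 0) := by
  apply squeeze_zero_norm (EE_bound hq0 hq1 x)
  have h1 : Filter.Tendsto (fun M : ℕ => q^(M+1)) Filter.atTop (nhds 0) :=
    (tendsto_pow_atTop_nhds_zero_of_lt_one hq0.le hq1).comp (Filter.tendsto_add_atTop_nat 1)
  have := h1.const_mul ((1-q)⁻¹ * (1-q)⁻¹ * (∑' j, vv q (x/(q:ℂ)) j))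
  simpa using this

lemma key' (hq0 : 0 < q) (hq1 : q < 1) (x : ℂ) (M : ℕ) :
    ∑ m ∈ range M, aa q (m+1) * qPoch q x (m+1)
      = ∑ m ∈ range M, aa q (m+1) + ∑ j ∈ range M, x^(j+1) * tt q (j+1) + EE q x M := by
  rw [key hq0 hq1 x M, EE, add_assoc]
  congr 1
  rw [← Finset.sum_add_distrib]
  refine Finset.sum_congr rfl fun j hj => ?_
  have hP := P_ne hq0 hq1 (M-1-j)
  push_cast
  ring

lemma qPoch_qq (n : ℕ) : qPoch q q n = ((P q n : ℝ):ℂ) := by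
  unfold qPoch P
  push_cast
  refine Finset.prod_congr rfl fun j _ => ?_
  rw [pow_succ']

lemma B_eq (hq0 : 0 < q) (hq1 : q < 1) (x : ℂ) (k : ℕ) :
    ((q:ℂ) ^ (k + 1) / (1 - (q:ℂ) ^ (k + 1))) *
        (1 + (q:ℂ) ^ ((k + 1) * k / 2) * (-x) ^ (k + 1) / qPoch q (q:ℂ) (k + 1))
      = aa q (k+1) + x^(k+1) * tt q (k+1) := by
  have hT : (k+1) * k / 2 = T (k+1) := by
    rw [T, Finset.sum_range_id]
    simp
  rw [hT, qPoch_qq, tt, aa, neg_pow]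
  have hP := P_ne hq0 hq1 (k+1)
  have h1 := oppC hq0 hq1 k
  field_simp
end QLog

theorem qlog_taylor_expansion (q : ℝ) (hq0 : 0 < q) (hq1 : q < 1) (x : ℂ) :
    Sq q x = -∑' k : ℕ, ((q : ℂ) ^ (k + 1) / (1 - (q : ℂ) ^ (k + 1))) *
      (1 + (q : ℂ) ^ ((k + 1) * k / 2) * (-x) ^ (k + 1) / qPoch q (q : ℂ) (k + 1)) := by
  have hA := QLog.summable_A hq0 hq1 x
  have ha := QLog.summable_a hq0 hq1 (q := q)
  have ht := QLog.summable_xt hq0 hq1 x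
  have hRHS : ∑' k : ℕ, ((q : ℂ) ^ (k + 1) / (1 - (q : ℂ) ^ (k + 1))) *
      (1 + (q : ℂ) ^ ((k + 1) * k / 2) * (-x) ^ (k + 1) / qPoch q (q : ℂ) (k + 1))
      = (∑' k : ℕ, QLog.aa q (k+1)) + ∑' k : ℕ, x^(k+1) * QLog.tt q (k+1) := by
    rw [tsum_congr (QLog.B_eq hq0 hq1 x)]
    exact Summable.tsum_add ha ht
  have hLHS : ∑' k : ℕ, QLog.aa q (k+1) * qPoch q x (k+1)
      = (∑' k : ℕ, QLog.aa q (k+1)) + ∑' k : ℕ, x^(k+1) * QLog.tt q (k+1) := by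
    have h1 : Filter.Tendsto (fun M => ∑ m ∈ Finset.range M, QLog.aa q (m+1) * qPoch q x (m+1))
        Filter.atTop (nhds (∑' k : ℕ, QLog.aa q (k+1) * qPoch q x (k+1))) :=
      hA.hasSum.tendsto_sum_nat
    have h2 : Filter.Tendsto (fun M => ∑ m ∈ Finset.range M, QLog.aa q (m+1) * qPoch q x (m+1))
        Filter.atTop (nhds ((∑' k : ℕ, QLog.aa q (k+1)) + (∑' k : ℕ, x^(k+1) * QLog.tt q (k+1)) + 0)) := by
      simp only [QLog.key' hq0 hq1 x]
      exact (ha.hasSum.tendsto_sum_nat.add ht.hasSum.tendsto_sum_nat).add (QLog.tendsto_EE hq0 hq1 x)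
    have := tendsto_nhds_unique h1 h2
    rwa [add_zero] at this
  have hSq : Sq q x = -∑' k : ℕ, QLog.aa q (k+1) * qPoch q x (k+1) := rfl
  rw [hSq, hLHS, hRHS]
end

section
/- For any complex x and 0 < q < 1, S_q(x) = -(q(1-x)/(1-q))·∫_0^1 G_q(qx, qt) d_q t, where the q-integral is ∫_0^1 f(t) d_q t = (1-q)∑_{k=0}^∞ f(q^k) q^k and G_q(x,t) = ∑_{k=0}^∞ t^k (x;q)_k. -/
noncomputable def Gq (q : ℝ) (x t : ℂ) : ℂ := ∑' k : ℕ, t ^ k * qPoch q x k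

/-- Jackson q-integral of f over [0,1]. -/
noncomputable def jacksonIntegral (q : ℝ) (f : ℂ → ℂ) : ℂ :=
  (1 - (q : ℂ)) * ∑' k : ℕ, f ((q : ℂ) ^ k) * (q : ℂ) ^ k

lemma qPoch_succ_shift (q : ℝ) (x : ℂ) (n : ℕ) :
    qPoch q x (n + 1) = (1 - x) * qPoch q ((q : ℂ) * x) n := by
  unfold qPoch
  rw [Finset.prod_range_succ', pow_zero, mul_one, mul_comm]
  congr 1
  refine Finset.prod_congr rfl (fun j _ => ?_)
  ring

lemma qPoch_norm_le (q : ℝ) (hq0 : 0 < q) (hq1 : q < 1) (x : ℂ) (n : ℕ) :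
    ‖qPoch q x n‖ ≤ Real.exp (‖x‖ / (1 - q)) := by
  have hq : ∀ j : ℕ, ‖(q : ℂ) ^ j‖ = q ^ j := by
    intro j; rw [norm_pow, Complex.norm_real, Real.norm_of_nonneg hq0.le]
  unfold qPoch
  calc ‖∏ j ∈ Finset.range n, (1 - x * (q : ℂ) ^ j)‖
      ≤ ∏ j ∈ Finset.range n, ‖(1 : ℂ) - x * (q : ℂ) ^ j‖ :=
        Finset.norm_prod_le _ _
    _ ≤ ∏ j ∈ Finset.range n, Real.exp (‖x‖ * q ^ j) := by
        refine Finset.prod_le_prod (fun j _ => norm_nonneg _) (fun j _ => ?_)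
        calc ‖(1 : ℂ) - x * (q : ℂ) ^ j‖ ≤ ‖(1 : ℂ)‖ + ‖x * (q : ℂ) ^ j‖ := norm_sub_le _ _
          _ = 1 + ‖x‖ * q ^ j := by rw [norm_one, norm_mul, hq]
          _ ≤ Real.exp (‖x‖ * q ^ j) := by
              have := Real.add_one_le_exp (‖x‖ * q ^ j); linarith
    _ = Real.exp (∑ j ∈ Finset.range n, ‖x‖ * q ^ j) := (Real.exp_sum _ _).symm
    _ ≤ Real.exp (‖x‖ / (1 - q)) := by
        apply Real.exp_le_exp.2
        rw [← Finset.mul_sum, div_eq_mul_inv]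
        refine mul_le_mul_of_nonneg_left ?_ (norm_nonneg x)
        have hsum : ∑ j ∈ Finset.range n, q ^ j ≤ ∑' j : ℕ, q ^ j :=
          Summable.sum_le_tsum _ (fun j _ => pow_nonneg hq0.le j)
            (summable_geometric_of_lt_one hq0.le hq1)
        rwa [tsum_geometric_of_lt_one hq0.le hq1] at hsum

theorem qlog_qintegral_representation (q : ℝ) (hq0 : 0 < q) (hq1 : q < 1) (x : ℂ) :
    Sq q x = -((q : ℂ) * (1 - x) / (1 - (q : ℂ))) *
      jacksonIntegral q (fun t => Gq q ((q : ℂ) * x) ((q : ℂ) * t)) := by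
  set P : ℕ → ℂ := fun n => qPoch q ((q : ℂ) * x) n with hP
  set C := Real.exp (‖(q : ℂ) * x‖ / (1 - q)) with hC
  have hPle : ∀ n, ‖P n‖ ≤ C := fun n => qPoch_norm_le q hq0 hq1 _ n
  have hqc : ∀ j : ℕ, ‖(q : ℂ) ^ j‖ = q ^ j := by
    intro j; rw [norm_pow, Complex.norm_real, Real.norm_of_nonneg hq0.le]
  set f : ℕ → ℕ → ℂ := fun k n => (q : ℂ) ^ k * ((q : ℂ) ^ (k + 1)) ^ n * P n with hf
  have hgeo : Summable (fun k : ℕ => q ^ k) := summable_geometric_of_lt_one hq0.le hq1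
  have hsum : Summable (Function.uncurry f) := by
    apply Summable.of_norm_bounded (g := fun p : ℕ × ℕ => q ^ p.1 * (C * q ^ p.2))
    · exact hgeo.mul_of_nonneg (hgeo.mul_left C) (fun k => pow_nonneg hq0.le k)
        (fun n => mul_nonneg (Real.exp_pos _).le (pow_nonneg hq0.le n))
    · rintro ⟨k, n⟩
      have h1 : ‖((q : ℂ) ^ (k + 1)) ^ n‖ = q ^ ((k + 1) * n) := by
        rw [← pow_mul, hqc]
      have h2 : q ^ ((k + 1) * n) ≤ q ^ n :=
        pow_le_pow_of_le_one hq0.le hq1.le (Nat.le_mul_of_pos_left n k.succ_pos)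
      have heq : ‖Function.uncurry f (k, n)‖ = q ^ k * q ^ ((k + 1) * n) * ‖P n‖ := by
        simp only [Function.uncurry, hf, norm_mul, hqc, h1]
      rw [heq]
      have hpk : (0:ℝ) ≤ q ^ k := pow_nonneg hq0.le k
      have hpn : (0:ℝ) ≤ q ^ n := pow_nonneg hq0.le n
      have hPn : (0:ℝ) ≤ ‖P n‖ := norm_nonneg _
      have hCn : (0:ℝ) ≤ C := (Real.exp_pos _).le
      calc q ^ k * q ^ ((k + 1) * n) * ‖P n‖ ≤ q ^ k * q ^ n * C := by
            refine mul_le_mul ?_ (hPle n) hPn (by positivity)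
            exact mul_le_mul_of_nonneg_left h2 hpk
        _ = q ^ k * (C * q ^ n) := by ring
  have hterm : ∀ k n : ℕ, (q : ℂ) ^ k * ((q : ℂ) ^ (k + 1)) ^ n
      = ((q : ℂ) ^ (n + 1)) ^ k * (q : ℂ) ^ n := by
    intro k n
    rw [← pow_mul, ← pow_mul, ← pow_add, ← pow_add]
    congr 1
    ring
  have hqlt : ∀ n : ℕ, ‖(q : ℂ) ^ (n + 1)‖ < 1 := by
    intro n; rw [hqc]; exact pow_lt_one₀ hq0.le hq1 n.succ_ne_zero
  have key1 : ∀ k : ℕ, Gq q ((q : ℂ) * x) ((q : ℂ) * (q : ℂ) ^ k) * (q : ℂ) ^ k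
      = ∑' n : ℕ, f k n := by
    intro k
    unfold Gq
    rw [← tsum_mul_right]
    refine tsum_congr (fun n => ?_)
    have hqq : (q : ℂ) * (q : ℂ) ^ k = (q : ℂ) ^ (k + 1) := by rw [pow_succ]; ring
    rw [hqq]
    simp only [hf]
    ring
  have key3 : ∀ n : ℕ, ∑' k : ℕ, f k n = P n * (q : ℂ) ^ n * (1 - (q : ℂ) ^ (n + 1))⁻¹ := by
    intro n
    have hterm' : ∀ k : ℕ, f k n = ((q : ℂ) ^ (n + 1)) ^ k * ((q : ℂ) ^ n * P n) := by
      intro k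
      simp only [hf]
      rw [hterm k n]
      ring
    rw [tsum_congr hterm', tsum_mul_right, tsum_geometric_of_norm_lt_one (hqlt n)]
    ring
  have hswap : ∑' k : ℕ, ∑' n : ℕ, f k n = ∑' n : ℕ, ∑' k : ℕ, f k n :=
    (hsum.tsum_comm).symm
  have hq1c : (1 : ℂ) - (q : ℂ) ≠ 0 := by
    rw [sub_ne_zero]
    exact_mod_cast hq1.ne'
  have hGq : (∑' k : ℕ, Gq q ((q : ℂ) * x) ((q : ℂ) * (q : ℂ) ^ k) * (q : ℂ) ^ k)
      = ∑' n : ℕ, P n * (q : ℂ) ^ n * (1 - (q : ℂ) ^ (n + 1))⁻¹ := by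
    rw [tsum_congr key1, hswap]
    exact tsum_congr key3
  unfold Sq jacksonIntegral
  rw [hGq]
  set T := ∑' n : ℕ, P n * (q : ℂ) ^ n * (1 - (q : ℂ) ^ (n + 1))⁻¹ with hT
  rw [neg_mul, neg_inj]
  have hconst : ((q : ℂ) * (1 - x) / (1 - (q : ℂ))) * ((1 - (q : ℂ)) * T)
      = (q : ℂ) * (1 - x) * T := by
    field_simp
  rw [hconst, hT, ← tsum_mul_left]
  refine tsum_congr (fun n => ?_)
  rw [qPoch_succ_shift q x n, div_eq_mul_inv, pow_succ]
  ring
end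

section
/- The kernel G_q satisfies G_q(x,t) = ∑_{j=0}^∞ (-xt)^j q^{j(j-1)/2}/(t;q)_{j+1} for |t| < 1 and all x ∈ ℂ. -/
lemma qPoch_zero (q x : ℂ) : qPoch q x 0 = 1 := by simp [qPoch]

lemma qPoch_succ (q x : ℂ) (k : ℕ) : qPoch q x (k + 1) = qPoch q x k * (1 - x * q ^ k) :=
  Finset.prod_range_succ _ _

lemma norm_qPoch_le (q : ℝ) (hq0 : 0 < q) (hq1 : q < 1) (x : ℂ) (k : ℕ) :
    ‖qPoch q x k‖ ≤ Real.exp (‖x‖ / (1 - q)) := by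
  have hq1' : (0:ℝ) < 1 - q := by linarith
  rw [qPoch, norm_prod]
  calc ∏ j ∈ Finset.range k, ‖1 - x * (q:ℂ) ^ j‖
      ≤ ∏ j ∈ Finset.range k, Real.exp (‖x‖ * q ^ j) := by
        apply Finset.prod_le_prod (fun j _ => norm_nonneg _)
        intro j _
        have h1 : ‖1 - x * (q:ℂ) ^ j‖ ≤ 1 + ‖x‖ * q ^ j := by
          calc ‖1 - x * (q:ℂ) ^ j‖ ≤ ‖(1:ℂ)‖ + ‖x * (q:ℂ) ^ j‖ := norm_sub_le _ _
            _ = 1 + ‖x‖ * q ^ j := by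
                rw [norm_one, norm_mul, norm_pow, Complex.norm_real,
                  Real.norm_of_nonneg hq0.le]
        refine h1.trans ?_
        rw [add_comm]
        exact Real.add_one_le_exp _
    _ = Real.exp (∑ j ∈ Finset.range k, ‖x‖ * q ^ j) := (Real.exp_sum _ _).symm
    _ ≤ Real.exp (‖x‖ / (1 - q)) := by
        apply Real.exp_le_exp.2
        rw [← Finset.mul_sum]
        rw [div_eq_mul_inv]
        apply mul_le_mul_of_nonneg_left _ (norm_nonneg x)
        have hsum := Summable.sum_le_tsum (Finset.range k) (fun i _ => by positivity)
          (summable_geometric_of_lt_one hq0.le hq1)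
        rwa [tsum_geometric_of_lt_one hq0.le hq1] at hsum

lemma norm_qPoch_ge (q : ℝ) (hq0 : 0 < q) (hq1 : q < 1) (t : ℂ) (ht : ‖t‖ < 1) (k : ℕ) :
    (1 - ‖t‖) ^ k ≤ ‖qPoch q t k‖ := by
  rw [qPoch, norm_prod]
  have main : ∀ j ∈ Finset.range k, (1 - ‖t‖) ≤ ‖1 - t * (q:ℂ) ^ j‖ := by
    intro j _
    have h1 : ‖t * (q:ℂ) ^ j‖ ≤ ‖t‖ := by
      rw [norm_mul, norm_pow, Complex.norm_real, Real.norm_of_nonneg hq0.le]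
      calc ‖t‖ * q ^ j ≤ ‖t‖ * 1 := by
            apply mul_le_mul_of_nonneg_left _ (norm_nonneg t)
            exact pow_le_one₀ hq0.le hq1.le
        _ = ‖t‖ := mul_one _
    calc 1 - ‖t‖ ≤ ‖(1:ℂ)‖ - ‖t * (q:ℂ) ^ j‖ := by rw [norm_one]; linarith
      _ ≤ ‖1 - t * (q:ℂ) ^ j‖ := norm_sub_norm_le _ _
  have := Finset.prod_le_prod (f := fun _ => (1 - ‖t‖)) (s := Finset.range k)
    (fun j _ => by linarith) main
  simpa using this

lemma qPoch_ne_zero (q : ℝ) (hq0 : 0 < q) (hq1 : q < 1) (t : ℂ) (ht : ‖t‖ < 1) (k : ℕ) :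
    qPoch q t k ≠ 0 := by
  have h1 := norm_qPoch_ge q hq0 hq1 t ht k
  have h2 : (0:ℝ) < (1 - ‖t‖) ^ k := pow_pos (by linarith) k
  intro h
  rw [h, norm_zero] at h1
  linarith

lemma summable_G (q : ℝ) (hq0 : 0 < q) (hq1 : q < 1) (x s : ℂ) (hs : ‖s‖ < 1) :
    Summable (fun k : ℕ => s ^ k * qPoch q x k) := by
  apply Summable.of_norm_bounded (g := fun k : ℕ => Real.exp (‖x‖ / (1 - q)) * ‖s‖ ^ k)
  · exact (summable_geometric_of_lt_one (norm_nonneg s) hs).mul_left _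
  · intro k
    rw [norm_mul, norm_pow, mul_comm]
    exact mul_le_mul_of_nonneg_right (norm_qPoch_le q hq0 hq1 x k) (by positivity)

lemma norm_Gq_le (q : ℝ) (hq0 : 0 < q) (hq1 : q < 1) (x s : ℂ) (r : ℝ) (hr : r < 1)
    (hs : ‖s‖ ≤ r) :
    ‖Gq q x s‖ ≤ Real.exp (‖x‖ / (1 - q)) / (1 - r) := by
  have hr0 : 0 ≤ r := le_trans (norm_nonneg s) hs
  have hs1 : ‖s‖ < 1 := lt_of_le_of_lt hs hr
  have h := norm_tsum_le_tsum_norm (f := fun k : ℕ => s ^ k * qPoch q x k)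
    ((summable_G q hq0 hq1 x s hs1).norm)
  refine h.trans ?_
  have hb : ∀ k : ℕ, ‖s ^ k * qPoch q x k‖ ≤ Real.exp (‖x‖ / (1 - q)) * r ^ k := by
    intro k
    rw [norm_mul, norm_pow, mul_comm]
    apply mul_le_mul (norm_qPoch_le q hq0 hq1 x k) (pow_le_pow_left₀ (norm_nonneg s) hs k)
      (by positivity) (by positivity)
  calc (∑' k : ℕ, ‖s ^ k * qPoch q x k‖)
      ≤ ∑' k : ℕ, Real.exp (‖x‖ / (1 - q)) * r ^ k := by
        apply Summable.tsum_le_tsum hb ((summable_G q hq0 hq1 x s hs1).norm)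
        exact (summable_geometric_of_lt_one hr0 hr).mul_left _
    _ = Real.exp (‖x‖ / (1 - q)) * (1 - r)⁻¹ := by
        rw [tsum_mul_left, tsum_geometric_of_lt_one hr0 hr]
    _ = Real.exp (‖x‖ / (1 - q)) / (1 - r) := by ring

lemma Gq_step (q : ℝ) (hq0 : 0 < q) (hq1 : q < 1) (x s : ℂ) (hs : ‖s‖ < 1) :
    (1 - s) * Gq q x s = 1 - x * s * Gq q x (q * s) := by
  have hqs : ‖(q:ℂ) * s‖ < 1 := by
    rw [norm_mul, Complex.norm_real, Real.norm_of_nonneg hq0.le]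
    calc q * ‖s‖ ≤ 1 * ‖s‖ := by nlinarith [norm_nonneg s]
      _ = ‖s‖ := one_mul _
      _ < 1 := hs
  have hG := summable_G q hq0 hq1 x s hs
  have hG' : Summable (fun k : ℕ => s ^ (k+1) * qPoch q x (k+1)) := by
    exact (summable_nat_add_iff (f := fun k : ℕ => s ^ k * qPoch q x k) 1).2 hG
  have hG'' : Summable (fun k : ℕ => s * (s ^ k * qPoch q x k)) := hG.mul_left s
  have key : (∑' k : ℕ, s ^ k * qPoch (q:ℂ) x k)
      = 1 + ∑' k : ℕ, s ^ (k+1) * qPoch (q:ℂ) x (k+1) := by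
    rw [Summable.tsum_eq_zero_add hG]
    simp [qPoch_zero]
  have expand : (1 - s) * Gq q x s
      = 1 + ∑' k : ℕ, (s ^ (k+1) * qPoch q x (k+1) - s * (s ^ k * qPoch q x k)) := by
    unfold Gq
    rw [Summable.tsum_sub hG' hG'', tsum_mul_left, key]
    ring
  rw [expand]
  have term_eq : ∀ k : ℕ, s ^ (k+1) * qPoch q x (k+1) - s * (s ^ k * qPoch q x k)
      = -(x * s) * (((q:ℂ) * s) ^ k * qPoch q x k) := by
    intro k
    rw [qPoch_succ]
    ring
  rw [tsum_congr term_eq, tsum_mul_left]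
  unfold Gq
  ring

lemma tri (n : ℕ) : n * (n - 1) / 2 + n = (n + 1) * (n + 1 - 1) / 2 := by
  rw [← Nat.choose_two_right, ← Nat.choose_two_right]
  rw [Nat.choose_succ_succ]
  simp [Nat.choose_one_right, Nat.add_comm]

lemma Gq_expand (q : ℝ) (hq0 : 0 < q) (hq1 : q < 1) (x t : ℂ) (ht : ‖t‖ < 1) (n : ℕ) :
    Gq q x t = (∑ j ∈ Finset.range n, (-x * t) ^ j * (q : ℂ) ^ (j * (j - 1) / 2) / qPoch q t (j + 1))
      + (-x * t) ^ n * (q : ℂ) ^ (n * (n - 1) / 2) / qPoch q t n * Gq q x ((q:ℂ) ^ n * t) := by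
  induction n with
  | zero => simp [qPoch_zero]
  | succ n ih =>
    have hqn : ‖(q:ℂ) ^ n * t‖ < 1 := by
      rw [norm_mul, norm_pow, Complex.norm_real, Real.norm_of_nonneg hq0.le]
      calc q ^ n * ‖t‖ ≤ 1 * ‖t‖ := by
            apply mul_le_mul_of_nonneg_right (pow_le_one₀ hq0.le hq1.le) (norm_nonneg t)
        _ = ‖t‖ := one_mul _
        _ < 1 := ht
    have hden : (1 : ℂ) - ((q:ℂ) ^ n * t) ≠ 0 := by
      intro h
      have : ‖(1:ℂ)‖ = ‖(q:ℂ) ^ n * t‖ := by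
        rw [sub_eq_zero] at h; rw [h]
      rw [norm_one] at this
      linarith
    have hstep := Gq_step q hq0 hq1 x ((q:ℂ) ^ n * t) hqn
    have hGn : Gq q x ((q:ℂ) ^ n * t)
        = 1 / (1 - (q:ℂ) ^ n * t) - x * ((q:ℂ) ^ n * t) / (1 - (q:ℂ) ^ n * t)
            * Gq q x ((q:ℂ) ^ (n+1) * t) := by
      have harg : (q:ℂ) * ((q:ℂ) ^ n * t) = (q:ℂ) ^ (n+1) * t := by ring
      rw [← harg]
      field_simp at hstep ⊢
      linear_combination hstep
    have hpoch_ne : qPoch q t n ≠ 0 := qPoch_ne_zero q hq0 hq1 t ht n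
    have hps : qPoch (q:ℂ) t (n+1) = qPoch q t n * (1 - t * (q:ℂ) ^ n) := qPoch_succ _ _ _
    have hqexp : (q:ℂ) ^ (n * (n-1)/2) * (q:ℂ) ^ n = (q:ℂ) ^ ((n+1) * (n+1-1)/2) := by
      rw [← pow_add, tri]
    have hcomm : (1:ℂ) - (q:ℂ) ^ n * t = 1 - t * (q:ℂ) ^ n := by ring
    rw [hcomm] at hden
    have hkey : (-x * t) ^ n * (q:ℂ) ^ (n * (n - 1) / 2) / qPoch q t n
          * (1 / (1 - (q:ℂ) ^ n * t) - x * ((q:ℂ) ^ n * t) / (1 - (q:ℂ) ^ n * t)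
              * Gq q x ((q:ℂ) ^ (n+1) * t))
        = (-x * t) ^ n * (q:ℂ) ^ (n * (n - 1) / 2) / qPoch q t (n + 1)
          + (-x * t) ^ (n+1) * (q:ℂ) ^ ((n+1) * ((n+1) - 1) / 2) / qPoch q t (n+1)
              * Gq q x ((q:ℂ) ^ (n+1) * t) := by
      have hden' : (1:ℂ) - (q:ℂ) ^ n * t ≠ 0 := by rw [hcomm]; exact hden
      rw [← hqexp, hps]
      field_simp [hden', hden, hpoch_ne]
      ring
    rw [ih, hGn, Finset.sum_range_succ, hkey]
    ring

lemma summable_aux (q : ℝ) (hq0 : 0 < q) (hq1 : q < 1) (c : ℝ) (hc : 0 ≤ c) :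
    Summable (fun n : ℕ => c ^ n * q ^ (n * (n - 1) / 2)) := by
  apply summable_of_ratio_norm_eventually_le (r := 1/2) (by norm_num)
  have h1 : Filter.Tendsto (fun n : ℕ => c * q ^ n) Filter.atTop (nhds 0) := by
    simpa using (tendsto_pow_atTop_nhds_zero_of_lt_one hq0.le hq1).const_mul c
  filter_upwards [h1.eventually_le_const (by norm_num : (0:ℝ) < 1/2)] with n hn
  have hmul : c ^ (n+1) * q ^ ((n+1) * ((n+1) - 1) / 2)
      = (c ^ n * q ^ (n * (n - 1) / 2)) * (c * q ^ n) := by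
    rw [← tri, pow_add]
    ring
  rw [hmul, norm_mul, mul_comm (1/2 : ℝ)]
  apply mul_le_mul_of_nonneg_left _ (norm_nonneg _)
  rw [Real.norm_of_nonneg (by positivity)]
  exact hn

lemma summable_F (q : ℝ) (hq0 : 0 < q) (hq1 : q < 1) (x t : ℂ) (ht : ‖t‖ < 1) :
    Summable (fun j : ℕ => (-x * t) ^ j * (q : ℂ) ^ (j * (j - 1) / 2) / qPoch q t (j + 1)) := by
  have ht1 : (0:ℝ) < 1 - ‖t‖ := by linarith
  set c : ℝ := ‖x‖ * ‖t‖ / (1 - ‖t‖) with hc_def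
  have hc : 0 ≤ c := by positivity
  apply Summable.of_norm_bounded
    (g := fun j : ℕ => (1 / (1 - ‖t‖)) * (c ^ j * q ^ (j * (j - 1) / 2)))
  · exact (summable_aux q hq0 hq1 c hc).mul_left _
  · intro j
    have hnum : ‖(-x * t) ^ j * (q : ℂ) ^ (j * (j - 1) / 2)‖
        = (‖x‖ * ‖t‖) ^ j * q ^ (j * (j - 1) / 2) := by
      rw [norm_mul, norm_pow, norm_pow, Complex.norm_real, Real.norm_of_nonneg hq0.le,
        neg_mul, norm_neg, norm_mul]
    have hden : (1 - ‖t‖) ^ (j+1) ≤ ‖qPoch (q:ℂ) t (j+1)‖ := norm_qPoch_ge q hq0 hq1 t ht (j+1)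
    rw [norm_div, hnum]
    have h1 : (‖x‖ * ‖t‖) ^ j * q ^ (j * (j - 1) / 2) / ‖qPoch (q:ℂ) t (j+1)‖
        ≤ (‖x‖ * ‖t‖) ^ j * q ^ (j * (j - 1) / 2) / (1 - ‖t‖) ^ (j+1) := by
      apply div_le_div_of_nonneg_left (by positivity) (by positivity) hden
    refine h1.trans (le_of_eq ?_)
    rw [hc_def, div_pow, pow_succ]
    field_simp

theorem Gq_alternative_expansion (q : ℝ) (hq0 : 0 < q) (hq1 : q < 1)
    (x t : ℂ) (ht : ‖t‖ < 1) :
    Gq q x t = ∑' j : ℕ, (-x * t) ^ j * (q : ℂ) ^ (j * (j - 1) / 2) / qPoch q t (j + 1) := by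
  have ht1 : (0:ℝ) < 1 - ‖t‖ := by linarith
  set f : ℕ → ℂ := fun j => (-x * t) ^ j * (q : ℂ) ^ (j * (j - 1) / 2) / qPoch q t (j + 1)
    with hf_def
  set R : ℕ → ℂ := fun n =>
    (-x * t) ^ n * (q : ℂ) ^ (n * (n - 1) / 2) / qPoch q t n * Gq q x ((q:ℂ) ^ n * t)
    with hR_def
  have hF := summable_F q hq0 hq1 x t ht
  have hpartial : Filter.Tendsto (fun n => ∑ j ∈ Finset.range n, f j) Filter.atTop
      (nhds (∑' j, f j)) := hF.hasSum.tendsto_sum_nat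
  -- remainder tends to zero
  set c : ℝ := ‖x‖ * ‖t‖ / (1 - ‖t‖) with hc_def
  have hc : 0 ≤ c := by positivity
  set B : ℝ := Real.exp (‖x‖ / (1 - q)) / (1 - ‖t‖) with hB_def
  have hB : 0 ≤ B := by positivity
  have hRnorm : ∀ n : ℕ, ‖R n‖ ≤ B * (c ^ n * q ^ (n * (n - 1) / 2)) := by
    intro n
    have hqn : ‖(q:ℂ) ^ n * t‖ ≤ ‖t‖ := by
      rw [norm_mul, norm_pow, Complex.norm_real, Real.norm_of_nonneg hq0.le]
      calc q ^ n * ‖t‖ ≤ 1 * ‖t‖ :=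
            mul_le_mul_of_nonneg_right (pow_le_one₀ hq0.le hq1.le) (norm_nonneg t)
        _ = ‖t‖ := one_mul _
    have hGb := norm_Gq_le q hq0 hq1 x ((q:ℂ) ^ n * t) ‖t‖ ht hqn
    have hnum : ‖(-x * t) ^ n * (q : ℂ) ^ (n * (n - 1) / 2)‖
        = (‖x‖ * ‖t‖) ^ n * q ^ (n * (n - 1) / 2) := by
      rw [norm_mul, norm_pow, norm_pow, Complex.norm_real, Real.norm_of_nonneg hq0.le,
        neg_mul, norm_neg, norm_mul]
    have hden : (1 - ‖t‖) ^ n ≤ ‖qPoch (q:ℂ) t n‖ := norm_qPoch_ge q hq0 hq1 t ht n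
    rw [hR_def]
    dsimp only
    rw [norm_mul, norm_div, hnum]
    calc (‖x‖ * ‖t‖) ^ n * q ^ (n * (n - 1) / 2) / ‖qPoch (q:ℂ) t n‖ * ‖Gq q x ((q:ℂ) ^ n * t)‖
        ≤ (‖x‖ * ‖t‖) ^ n * q ^ (n * (n - 1) / 2) / (1 - ‖t‖) ^ n * B := by
          apply mul_le_mul _ hGb (norm_nonneg _) (by positivity)
          exact div_le_div_of_nonneg_left (by positivity) (by positivity) hden
      _ = B * (c ^ n * q ^ (n * (n - 1) / 2)) := by
          rw [hc_def, div_pow]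
          field_simp
  have hbound : Filter.Tendsto (fun n : ℕ => B * (c ^ n * q ^ (n * (n - 1) / 2)))
      Filter.atTop (nhds 0) := by
    simpa using ((summable_aux q hq0 hq1 c hc).tendsto_atTop_zero).const_mul B
  have hR0 : Filter.Tendsto R Filter.atTop (nhds 0) := by
    rw [tendsto_zero_iff_norm_tendsto_zero]
    exact squeeze_zero (fun n => norm_nonneg _) hRnorm hbound
  have heq : ∀ n : ℕ, (∑ j ∈ Finset.range n, f j) = Gq q x t - R n := by
    intro n
    rw [Gq_expand q hq0 hq1 x t ht n]
    ring
  have hpartial' : Filter.Tendsto (fun n => ∑ j ∈ Finset.range n, f j) Filter.atTop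
      (nhds (Gq q x t)) := by
    rw [show (fun n => ∑ j ∈ Finset.range n, f j) = fun n => Gq q x t - R n from funext heq]
    simpa using tendsto_const_nhds.sub hR0
  exact tendsto_nhds_unique hpartial' hpartial
end

section
/- For all x ≠ 0 with 0 < q < 1: ∑_{k=0}^∞ q^k (x;q)_k = (1 - (x;q)_∞)/x, where (x;q)_∞ = ∏_{j=0}^∞ (1 - x q^j). -/
theorem qPoch_geometric_sum (q : ℝ) (hq0 : 0 < q) (hq1 : q < 1) (x : ℂ) (hx : x ≠ 0) :
    ∑' k : ℕ, (q : ℂ) ^ k * qPoch q x k = (1 - ∏' j : ℕ, (1 - x * (q : ℂ) ^ j)) / x := by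
  set f : ℕ → ℂ := fun j => 1 - x * (q : ℂ) ^ j with hf
  -- Multipliable
  have hmul : Multipliable f := by
    by_cases hz : ∃ j0, f j0 = 0
    · obtain ⟨j0, hj0⟩ := hz
      refine ⟨0, ?_⟩
      rw [HasProd]
      have : ∀ᶠ s : Finset ℕ in Filter.atTop, ∏ i ∈ s, f i = 0 := by
        filter_upwards [Filter.eventually_ge_atTop {j0}] with s hs
        exact Finset.prod_eq_zero (hs (Finset.mem_singleton_self j0)) hj0
      exact Filter.Tendsto.congr' (Filter.EventuallyEq.symm this) tendsto_const_nhds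
    · push_neg at hz
      have hlogsum : Summable fun n => Complex.log (f n) := by
        have hq0' : (0:ℝ) < q := hq0
        apply Summable.of_norm_bounded_eventually_nat (g := fun n => 3/2 * (‖x‖ * q ^ n))
        · exact (Summable.mul_left _ <| summable_geometric_of_lt_one hq0.le hq1).mul_left _
        · have h1 : Filter.Tendsto (fun n : ℕ => ‖x‖ * q ^ n) Filter.atTop (nhds 0) := by
            simpa using (tendsto_pow_atTop_nhds_zero_of_lt_one hq0.le hq1).const_mul ‖x‖
          filter_upwards [h1.eventually_le_const (by norm_num : (0:ℝ) < 1/2)] with n hn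
          have hxq : ‖-(x * (q:ℂ)^n)‖ ≤ 1/2 := by
            rw [norm_neg, norm_mul, norm_pow, Complex.norm_real, Real.norm_of_nonneg hq0.le]
            exact hn
          have := Complex.norm_log_one_add_half_le_self hxq
          rw [show (1 : ℂ) + -(x * (q:ℂ)^n) = f n by ring] at this
          refine this.trans ?_
          rw [norm_neg, norm_mul, norm_pow, Complex.norm_real, Real.norm_of_nonneg hq0.le]
      exact Complex.multipliable_of_summable_log hlogsum
  have hP : Filter.Tendsto (fun n => qPoch q x n) Filter.atTop (nhds (∏' j, f j)) :=
    hmul.hasProd.tendsto_prod_nat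
  -- Summability of the series
  set B : ℝ := Real.exp (‖x‖ * (1 - q)⁻¹) with hB
  have hbound : ∀ k, ‖(q:ℂ) ^ k * qPoch q x k‖ ≤ B * q ^ k := by
    intro k
    rw [norm_mul, norm_pow, Complex.norm_real, Real.norm_of_nonneg hq0.le, qPoch, mul_comm]
    gcongr
    rw [norm_prod]
    calc ∏ j ∈ Finset.range k, ‖1 - x * (q:ℂ)^j‖
        ≤ ∏ j ∈ Finset.range k, Real.exp (‖x‖ * q ^ j) := by
          apply Finset.prod_le_prod (fun _ _ => norm_nonneg _)
          intro j _
          refine (norm_sub_le _ _).trans ?_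
          rw [norm_one, norm_mul, norm_pow, Complex.norm_real, Real.norm_of_nonneg hq0.le]
          linarith [Real.add_one_le_exp (‖x‖ * q ^ j)]
      _ = Real.exp (∑ j ∈ Finset.range k, ‖x‖ * q ^ j) := by
          rw [Real.exp_sum]
      _ ≤ B := by
          apply Real.exp_le_exp.mpr
          rw [← Finset.mul_sum]
          have : ∑ j ∈ Finset.range k, q ^ j ≤ (1 - q)⁻¹ := by
            rw [← tsum_geometric_of_lt_one hq0.le hq1]
            exact Summable.sum_le_tsum _ (fun j _ => pow_nonneg hq0.le j)
              (summable_geometric_of_lt_one hq0.le hq1)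
          calc ‖x‖ * ∑ j ∈ Finset.range k, q ^ j ≤ ‖x‖ * (1 - q)⁻¹ := by
                gcongr
            _ = ‖x‖ * (1 - q)⁻¹ := rfl
  have hsum : Summable fun k : ℕ => (q:ℂ) ^ k * qPoch q x k :=
    Summable.of_norm_bounded ((summable_geometric_of_lt_one hq0.le hq1).mul_left B) hbound
  -- Telescoping
  have htel : ∀ n, x * ∑ k ∈ Finset.range n, (q:ℂ) ^ k * qPoch q x k = 1 - qPoch q x n := by
    intro n
    induction n with
    | zero => simp [qPoch]
    | succ n ih =>
      rw [Finset.sum_range_succ, mul_add, ih]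
      simp only [qPoch, Finset.prod_range_succ]
      ring
  have hS : Filter.Tendsto (fun n => ∑ k ∈ Finset.range n, (q:ℂ) ^ k * qPoch q x k)
      Filter.atTop (nhds (∑' k, (q:ℂ) ^ k * qPoch q x k)) := hsum.hasSum.tendsto_sum_nat
  have h1 : Filter.Tendsto (fun n => x * ∑ k ∈ Finset.range n, (q:ℂ) ^ k * qPoch q x k)
      Filter.atTop (nhds (x * ∑' k, (q:ℂ) ^ k * qPoch q x k)) := hS.const_mul x
  have h2 : Filter.Tendsto (fun n => x * ∑ k ∈ Finset.range n, (q:ℂ) ^ k * qPoch q x k)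
      Filter.atTop (nhds (1 - ∏' j, f j)) := by
    simp only [htel]
    exact tendsto_const_nhds.sub hP
  have := tendsto_nhds_unique h1 h2
  field_simp
  linear_combination this
end

section
/- For every positive integer n, S_q(q^n) = -n + (q;q)_∞ · ∑_{k=0}^{n-1} 1/(q;q)_k, where 0 < q < 1. -/
namespace QlogAux

open Filter Finset

variable {q : ℝ}

lemma pow_lt (hq0 : 0 < q) (hq1 : q < 1) (m : ℕ) (hm : 1 ≤ m) : q ^ m < 1 :=
  pow_lt_one₀ hq0.le hq1 (by omega)

lemma one_sub_ne (hq0 : 0 < q) (hq1 : q < 1) (m : ℕ) (hm : 1 ≤ m) :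
    (1 - (q : ℂ) ^ m) ≠ 0 := by
  rw [sub_ne_zero]
  intro h
  have h' : (1 : ℝ) = q ^ m := by exact_mod_cast h
  exact absurd h'.symm (ne_of_lt (pow_lt hq0 hq1 m hm))

/-- `qPoch q (q^n) k` as a real number. -/
lemma qPoch_eq_real (n k : ℕ) :
    qPoch q ((q : ℂ) ^ n) k = ((∏ j ∈ range k, (1 - q ^ (n + j)) : ℝ) : ℂ) := by
  rw [qPoch, Complex.ofReal_prod]
  refine Finset.prod_congr rfl fun j _ => ?_
  push_cast [pow_add]
  ring

lemma norm_qPoch_le (hq0 : 0 < q) (hq1 : q < 1) (n k : ℕ) (hn : 1 ≤ n) :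
    ‖qPoch q ((q : ℂ) ^ n) k‖ ≤ 1 := by
  rw [qPoch_eq_real, Complex.norm_real]
  have h1 : ∀ j ∈ range k, (0 : ℝ) ≤ 1 - q ^ (n + j) := fun j _ => by
    have := pow_lt hq0 hq1 (n + j) (by omega); linarith
  have h2 : ∀ j ∈ range k, (1 - q ^ (n + j) : ℝ) ≤ 1 := fun j _ => by
    have : (0 : ℝ) < q ^ (n + j) := pow_pos hq0 _
    linarith
  rw [Real.norm_eq_abs, abs_of_nonneg (Finset.prod_nonneg h1)]
  exact Finset.prod_le_one h1 h2

lemma norm_qpow (m : ℕ) : ‖(q : ℂ) ^ m‖ = |q| ^ m := by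
  rw [_root_.norm_pow, Complex.norm_real, Real.norm_eq_abs]

lemma norm_one_sub_ge (hq0 : 0 < q) (hq1 : q < 1) (m : ℕ) (hm : 1 ≤ m) :
    1 - q ≤ ‖1 - (q : ℂ) ^ m‖ := by
  have h1 : ‖(1 : ℂ)‖ - ‖(q : ℂ) ^ m‖ ≤ ‖1 - (q : ℂ) ^ m‖ := norm_sub_norm_le _ _
  have h2 : ‖(q : ℂ) ^ m‖ = q ^ m := by
    rw [norm_qpow, abs_of_pos hq0]
  have h3 : q ^ m ≤ q := by
    calc q ^ m ≤ q ^ 1 := pow_le_pow_of_le_one hq0.le hq1.le hm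
    _ = q := pow_one q
  simp only [norm_one, h2] at h1
  linarith

/-- Summability of the defining series at `x = q^n`. -/
lemma summable_f (hq0 : 0 < q) (hq1 : q < 1) (n : ℕ) (hn : 1 ≤ n) :
    Summable (fun k : ℕ =>
      ((q : ℂ) ^ (k + 1) / (1 - (q : ℂ) ^ (k + 1))) * qPoch q ((q : ℂ) ^ n) (k + 1)) := by
  have hq1' : (0 : ℝ) < 1 - q := by linarith
  refine Summable.of_norm_bounded (g := fun k => (q / (1 - q)) * q ^ k)
    ((summable_geometric_of_lt_one hq0.le hq1).mul_left _) (fun k => ?_)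
  rw [norm_mul, norm_div]
  have h1 : ‖(q : ℂ) ^ (k + 1)‖ = q ^ (k + 1) := by
    rw [norm_qpow, abs_of_pos hq0]
  have h2 := norm_one_sub_ge hq0 hq1 (k + 1) (by omega)
  have h3 := norm_qPoch_le hq0 hq1 n (k + 1) hn
  have h4 : ‖(q : ℂ) ^ (k + 1) / (1 - (q : ℂ) ^ (k + 1))‖ ≤ q ^ (k + 1) / (1 - q) := by
    rw [norm_div, h1]
    exact div_le_div_of_nonneg_left (by positivity) hq1' h2 |>.trans_eq rfl
  calc ‖(q : ℂ) ^ (k + 1)‖ / ‖1 - (q : ℂ) ^ (k + 1)‖ * ‖qPoch q ((q : ℂ) ^ n) (k + 1)‖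
      ≤ ‖(q : ℂ) ^ (k + 1)‖ / ‖1 - (q : ℂ) ^ (k + 1)‖ * 1 := by
        apply mul_le_mul_of_nonneg_left h3 (by positivity)
    _ = ‖(q : ℂ) ^ (k + 1) / (1 - (q : ℂ) ^ (k + 1))‖ := by rw [mul_one, norm_div]
    _ ≤ q ^ (k + 1) / (1 - q) := h4
    _ = (q / (1 - q)) * q ^ k := by rw [pow_succ]; ring

/-- Telescoping `HasSum`. -/
lemma hasSum_tele (hq0 : 0 < q) (hq1 : q < 1) (m : ℕ) (hm : 1 ≤ m) {L : ℂ}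
    (hL : Tendsto (fun k => qPoch q ((q : ℂ) ^ m) k) atTop (nhds L)) :
    HasSum (fun k : ℕ => (q : ℂ) ^ m * (q : ℂ) ^ k * qPoch q ((q : ℂ) ^ m) k) (1 - L) := by
  have hnorm : Summable (fun k : ℕ =>
      ‖(q : ℂ) ^ m * (q : ℂ) ^ k * qPoch q ((q : ℂ) ^ m) k‖) := by
    refine Summable.of_nonneg_of_le (fun k => norm_nonneg _) (fun k => ?_)
      (summable_geometric_of_lt_one hq0.le hq1)
    rw [norm_mul, norm_mul]
    have h1 : ‖(q : ℂ) ^ m‖ ≤ 1 := by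
      rw [norm_qpow, abs_of_pos hq0]
      exact (pow_le_one₀ hq0.le hq1.le)
    have h2 : ‖(q : ℂ) ^ k‖ = q ^ k := by rw [norm_qpow, abs_of_pos hq0]
    have h3 := norm_qPoch_le hq0 hq1 m k hm
    calc ‖(q : ℂ) ^ m‖ * ‖(q : ℂ) ^ k‖ * ‖qPoch q ((q : ℂ) ^ m) k‖
        ≤ 1 * ‖(q : ℂ) ^ k‖ * 1 := by
          apply mul_le_mul (mul_le_mul h1 le_rfl (norm_nonneg _) zero_le_one) h3
            (norm_nonneg _) (by positivity)
      _ = q ^ k := by rw [one_mul, mul_one, h2]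
  rw [hasSum_iff_tendsto_nat_of_summable_norm hnorm]
  have key : ∀ N : ℕ, ∑ k ∈ range N, (q : ℂ) ^ m * (q : ℂ) ^ k * qPoch q ((q : ℂ) ^ m) k
      = 1 - qPoch q ((q : ℂ) ^ m) N := by
    intro N
    have : ∀ k : ℕ, (q : ℂ) ^ m * (q : ℂ) ^ k * qPoch q ((q : ℂ) ^ m) k
        = qPoch q ((q : ℂ) ^ m) k - qPoch q ((q : ℂ) ^ m) (k + 1) := by
      intro k
      rw [qPoch, qPoch, Finset.prod_range_succ]
      ring
    calc ∑ k ∈ range N, (q : ℂ) ^ m * (q : ℂ) ^ k * qPoch q ((q : ℂ) ^ m) k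
        = ∑ k ∈ range N, (qPoch q ((q : ℂ) ^ m) k - qPoch q ((q : ℂ) ^ m) (k + 1)) := by
          exact Finset.sum_congr rfl fun k _ => this k
      _ = qPoch q ((q : ℂ) ^ m) 0 - qPoch q ((q : ℂ) ^ m) N := Finset.sum_range_sub' _ _
      _ = 1 - qPoch q ((q : ℂ) ^ m) N := by rw [qPoch]; simp
  simp only [key]
  exact tendsto_const_nhds.sub hL

/-- Summability of real logs of the factors. -/
lemma summable_log (hq0 : 0 < q) (hq1 : q < 1) :
    Summable (fun j : ℕ => Real.log (1 - q ^ (j + 1))) := by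
  have hq1' : (0 : ℝ) < 1 - q := by linarith
  refine Summable.of_norm_bounded (g := fun j => (q / (1 - q)) * q ^ j)
    ((summable_geometric_of_lt_one hq0.le hq1).mul_left _) (fun j => ?_)
  have hx1 : q ^ (j + 1) < 1 := pow_lt hq0 hq1 _ (by omega)
  have hx0 : (0 : ℝ) < q ^ (j + 1) := pow_pos hq0 _
  have hpos : (0 : ℝ) < 1 - q ^ (j + 1) := by linarith
  have hle : Real.log (1 - q ^ (j + 1)) ≤ 0 := Real.log_nonpos (by linarith) (by linarith)
  rw [Real.norm_eq_abs, abs_of_nonpos hle]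
  have h1 : -Real.log (1 - q ^ (j + 1)) = Real.log (1 - q ^ (j + 1))⁻¹ :=
    (Real.log_inv _).symm
  rw [h1]
  have h2 : Real.log (1 - q ^ (j + 1))⁻¹ ≤ (1 - q ^ (j + 1))⁻¹ - 1 :=
    Real.log_le_sub_one_of_pos (by positivity)
  have h3 : (1 - q ^ (j + 1))⁻¹ - 1 = q ^ (j + 1) / (1 - q ^ (j + 1)) := by
    field_simp
    ring
  have h4 : q ^ (j + 1) / (1 - q ^ (j + 1)) ≤ q ^ (j + 1) / (1 - q) := by
    apply div_le_div_of_nonneg_left (by positivity) hq1'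
    have : q ^ (j + 1) ≤ q := by
      calc q ^ (j + 1) ≤ q ^ 1 := pow_le_pow_of_le_one hq0.le hq1.le (by omega)
      _ = q := pow_one q
    linarith
  have h5 : q ^ (j + 1) / (1 - q) = (q / (1 - q)) * q ^ j := by rw [pow_succ]; ring
  linarith [h2.trans (h3.le.trans (h4.trans h5.le))]

lemma multipliable_c (hq0 : 0 < q) (hq1 : q < 1) :
    Multipliable (fun j : ℕ => (1 - (q : ℂ) ^ (j + 1))) := by
  have hpos : ∀ (_ : Unit) (j : ℕ), (0 : ℝ) < 1 - q ^ (j + 1) := fun _ j => by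
    have := pow_lt hq0 hq1 (j + 1) (by omega); linarith
  have hr : Multipliable (fun j : ℕ => (1 - q ^ (j + 1) : ℝ)) :=
    Real.multipliable_of_summable_log (fun j => hpos () j) (summable_log hq0 hq1)
  have hc := hr.map Complex.ofRealHom.toMonoidHom Complex.continuous_ofReal
  refine hc.congr fun j => ?_
  simp only [Function.comp_apply, RingHom.toMonoidHom_eq_coe, MonoidHom.coe_coe,
    Complex.ofRealHom_eq_coe]
  push_cast
  ring

/-- Partial products of `(q;q)` converge to the infinite product. -/
lemma tendsto_qq (hq0 : 0 < q) (hq1 : q < 1) :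
    Tendsto (fun N => qPoch q q N) atTop
      (nhds (∏' j : ℕ, (1 - (q : ℂ) ^ (j + 1)))) := by
  have h := (multipliable_c hq0 hq1).hasProd.tendsto_prod_nat
  refine h.congr fun N => ?_
  rw [qPoch]
  exact Finset.prod_congr rfl fun j _ => by rw [pow_succ']

lemma qPoch_qq_ne (hq0 : 0 < q) (hq1 : q < 1) (n : ℕ) : qPoch q q n ≠ 0 := by
  rw [qPoch]
  refine Finset.prod_ne_zero_iff.mpr fun j _ => ?_
  have := one_sub_ne hq0 hq1 (j + 1) (by omega)
  rwa [pow_succ'] at this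

lemma qPoch_shift (n k : ℕ) :
    qPoch q q (n + k) = qPoch q q n * qPoch q ((q : ℂ) ^ (n + 1)) k := by
  rw [qPoch, qPoch, qPoch, Finset.prod_range_add]
  congr 1
  refine Finset.prod_congr rfl fun j _ => ?_
  rw [pow_add, pow_add]
  ring

lemma tendsto_tail (hq0 : 0 < q) (hq1 : q < 1) (n : ℕ) :
    Tendsto (fun k => qPoch q ((q : ℂ) ^ (n + 1)) k) atTop
      (nhds ((∏' j : ℕ, (1 - (q : ℂ) ^ (j + 1))) / qPoch q q n)) := by
  have h1 : Tendsto (fun k : ℕ => qPoch q q (n + k)) atTop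
      (nhds (∏' j : ℕ, (1 - (q : ℂ) ^ (j + 1)))) := by
    have := (tendsto_qq hq0 hq1).comp (tendsto_add_atTop_nat n)
    refine this.congr fun k => ?_
    simp [Function.comp, Nat.add_comm]
  have h2 := h1.div_const (qPoch q q n)
  refine h2.congr fun k => ?_
  rw [qPoch_shift]
  field_simp [qPoch_qq_ne hq0 hq1 n]

/-- The main induction. -/
lemma main_tsum (hq0 : 0 < q) (hq1 : q < 1) (n : ℕ) (hn : 1 ≤ n) :
    (∑' k : ℕ, ((q : ℂ) ^ (k + 1) / (1 - (q : ℂ) ^ (k + 1))) * qPoch q ((q : ℂ) ^ n) (k + 1))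
      = (n : ℂ) - (∏' j : ℕ, (1 - (q : ℂ) ^ (j + 1))) *
          ∑ k ∈ Finset.range n, (qPoch q q k)⁻¹ := by
  induction n, hn using Nat.le_induction with
  | base =>
    have hL : Tendsto (fun k => qPoch q ((q : ℂ) ^ 1) k) atTop
        (nhds (∏' j : ℕ, (1 - (q : ℂ) ^ (j + 1)))) := by
      have := tendsto_qq hq0 hq1
      refine this.congr fun N => ?_
      rw [pow_one]
    have hs := hasSum_tele hq0 hq1 1 le_rfl hL
    have heq : ∀ k : ℕ, ((q : ℂ) ^ (k + 1) / (1 - (q : ℂ) ^ (k + 1))) * qPoch q ((q : ℂ) ^ 1) (k + 1)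
        = (q : ℂ) ^ 1 * (q : ℂ) ^ k * qPoch q ((q : ℂ) ^ 1) k := by
      intro k
      have hne := one_sub_ne hq0 hq1 (k + 1) (by omega)
      rw [qPoch, qPoch, Finset.prod_range_succ, ← qPoch]
      field_simp
      ring
    have hs' : HasSum (fun k : ℕ =>
        ((q : ℂ) ^ (k + 1) / (1 - (q : ℂ) ^ (k + 1))) * qPoch q ((q : ℂ) ^ 1) (k + 1))
        (1 - ∏' j : ℕ, (1 - (q : ℂ) ^ (j + 1))) := hs.congr_fun heq
    rw [hs'.tsum_eq]
    simp [qPoch]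
  | succ n hn ih =>
    set P : ℂ := ∏' j : ℕ, (1 - (q : ℂ) ^ (j + 1)) with hP
    have hd : HasSum (fun k : ℕ => (q : ℂ) ^ (n + 1) * (q : ℂ) ^ k * qPoch q ((q : ℂ) ^ (n + 1)) k)
        (1 - P / qPoch q q n) :=
      hasSum_tele hq0 hq1 (n + 1) (by omega) (tendsto_tail hq0 hq1 n)
    have hfn := (summable_f hq0 hq1 n hn).hasSum
    have hcomb := hfn.add hd
    have heq : ∀ k : ℕ,
        ((q : ℂ) ^ (k + 1) / (1 - (q : ℂ) ^ (k + 1))) * qPoch q ((q : ℂ) ^ (n + 1)) (k + 1)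
        = (((q : ℂ) ^ (k + 1) / (1 - (q : ℂ) ^ (k + 1))) * qPoch q ((q : ℂ) ^ n) (k + 1))
          + (q : ℂ) ^ (n + 1) * (q : ℂ) ^ k * qPoch q ((q : ℂ) ^ (n + 1)) k := by
      intro k
      have hne := one_sub_ne hq0 hq1 (k + 1) (by omega)
      have hA : qPoch q ((q : ℂ) ^ n) (k + 1)
          = qPoch q ((q : ℂ) ^ (n + 1)) k * (1 - (q : ℂ) ^ n) := by
        rw [qPoch, qPoch, Finset.prod_range_succ']
        congr 1
        · refine Finset.prod_congr rfl fun j _ => ?_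
          rw [pow_succ, pow_succ']
          ring
        · rw [pow_zero, mul_one]
      have hB : qPoch q ((q : ℂ) ^ (n + 1)) (k + 1)
          = qPoch q ((q : ℂ) ^ (n + 1)) k * (1 - (q : ℂ) ^ (n + 1) * (q : ℂ) ^ k) := by
        rw [qPoch, qPoch, Finset.prod_range_succ]
      rw [hA, hB]
      field_simp
      ring
    have hs' : HasSum (fun k : ℕ =>
        ((q : ℂ) ^ (k + 1) / (1 - (q : ℂ) ^ (k + 1))) * qPoch q ((q : ℂ) ^ (n + 1)) (k + 1))
        ((∑' k : ℕ, ((q : ℂ) ^ (k + 1) / (1 - (q : ℂ) ^ (k + 1))) * qPoch q ((q : ℂ) ^ n) (k + 1))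
          + (1 - P / qPoch q q n)) := hcomb.congr_fun heq
    rw [hs'.tsum_eq, ih, Finset.sum_range_succ]
    have hne := qPoch_qq_ne hq0 hq1 n
    push_cast
    field_simp
    ring

end QlogAux

theorem qlog_value_at_positive_powers (q : ℝ) (hq0 : 0 < q) (hq1 : q < 1)
    (n : ℕ) (hn : 1 ≤ n) :
    Sq q ((q : ℂ) ^ n) = -(n : ℂ) +
      (∏' j : ℕ, (1 - (q : ℂ) ^ (j + 1))) *
        ∑ k ∈ Finset.range n, 1 / ∏ j ∈ Finset.range k, (1 - (q : ℂ) ^ (j + 1)) := by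
  rw [Sq, QlogAux.main_tsum hq0 hq1 n hn]
  have h : ∀ k : ℕ, (qPoch q q k)⁻¹ = 1 / ∏ j ∈ Finset.range k, (1 - (q : ℂ) ^ (j + 1)) := by
    intro k
    rw [one_div, qPoch]
    congr 1
    exact Finset.prod_congr rfl fun j _ => by rw [pow_succ']
  simp only [h]
  ring
end

section
/- For every positive integer n: ∑_{k=1}^n ((q^{-n};q)_k/(1-q^k))·q^k = -n, where 0 < q < 1. -/
private noncomputable def Fq (q : ℝ) (n k : ℕ) : ℝ :=
  ∏ j ∈ Finset.range k, (1 - q ^ ((j : ℤ) - n))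

private lemma Fq_succ (q : ℝ) (n m : ℕ) :
    Fq q n (m + 1) = Fq q n m * (1 - q ^ ((m : ℤ) - n)) := by
  rw [Fq, Finset.prod_range_succ, ← Fq]

private lemma Fq_shift (q : ℝ) (n m : ℕ) :
    Fq q (n + 1) (m + 1) = Fq q n m * (1 - q ^ (-((n : ℤ) + 1))) := by
  rw [Fq, Finset.prod_range_succ']
  congr 1
  apply Finset.prod_congr rfl
  intro i _
  congr 1
  push_cast
  ring

private lemma Fq_tele (q : ℝ) (n m : ℕ) :
    ∑ i ∈ Finset.range m, q ^ ((i : ℤ) - n) * Fq q n i = 1 - Fq q n m := by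
  induction m with
  | zero => simp [Fq]
  | succ m ih => rw [Finset.sum_range_succ, ih, Fq_succ]; ring

private lemma qlog_range (q : ℝ) (hq0 : 0 < q) (hq1 : q < 1) (n : ℕ) :
    ∑ i ∈ Finset.range n, Fq q n (i + 1) / (1 - q ^ (i + 1)) * q ^ (i + 1) = -(n : ℝ) := by
  have hq : q ≠ 0 := ne_of_gt hq0
  have hne : ∀ m : ℕ, (1 : ℝ) - q ^ (m + 1) ≠ 0 := by
    intro m
    have : q ^ (m + 1) < 1 := pow_lt_one₀ hq0.le hq1 (Nat.succ_ne_zero m)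
    linarith
  have hpow : ∀ m : ℕ, (q : ℝ) ^ (m + 1) ≠ 0 := fun m => pow_ne_zero _ hq
  induction n with
  | zero => simp
  | succ n ih =>
      rw [Finset.sum_range_succ]
      have hzpow : ∀ i : ℕ, q ^ ((i : ℤ) - n) = q ^ (i + 1) / q ^ (n + 1) := by
        intro i
        rw [show ((i : ℤ) - n) = ((i + 1 : ℕ) : ℤ) - ((n + 1 : ℕ) : ℤ) by push_cast; ring,
          zpow_sub₀ hq, zpow_natCast, zpow_natCast]
      have hzneg : q ^ (-((n : ℤ) + 1)) = (q ^ (n + 1))⁻¹ := by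
        rw [show (-((n : ℤ) + 1)) = -((n + 1 : ℕ) : ℤ) by push_cast; ring, zpow_neg,
          zpow_natCast]
      have hstep : ∀ i : ℕ,
          Fq q (n + 1) (i + 1) / (1 - q ^ (i + 1)) * q ^ (i + 1)
            = Fq q n (i + 1) / (1 - q ^ (i + 1)) * q ^ (i + 1)
              - q ^ ((i : ℤ) - n) * Fq q n i := by
        intro i
        rw [Fq_shift, Fq_succ, hzpow, hzneg]
        have ha : q ^ (n + 1) ≠ 0 := hpow n
        have hb : (1 : ℝ) - q ^ (i + 1) ≠ 0 := hne i
        set a := q ^ (n + 1)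
        set b := q ^ (i + 1)
        field_simp
        ring
      have hlast :
          Fq q (n + 1) (n + 1) / (1 - q ^ (n + 1)) * q ^ (n + 1) = -Fq q n n := by
        rw [Fq_shift, hzneg]
        have ha : q ^ (n + 1) ≠ 0 := hpow n
        have hb : (1 : ℝ) - q ^ (n + 1) ≠ 0 := hne n
        set a := q ^ (n + 1)
        field_simp
        ring
      calc ∑ i ∈ Finset.range n, Fq q (n + 1) (i + 1) / (1 - q ^ (i + 1)) * q ^ (i + 1)
            + Fq q (n + 1) (n + 1) / (1 - q ^ (n + 1)) * q ^ (n + 1)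
          = ∑ i ∈ Finset.range n,
              (Fq q n (i + 1) / (1 - q ^ (i + 1)) * q ^ (i + 1)
                - q ^ ((i : ℤ) - n) * Fq q n i) + -Fq q n n := by
            rw [hlast]
            congr 1
            exact Finset.sum_congr rfl fun i _ => hstep i
        _ = -(n : ℝ) - (1 - Fq q n n) + -Fq q n n := by
            rw [Finset.sum_sub_distrib, ih, Fq_tele]
        _ = -((n + 1 : ℕ) : ℝ) := by push_cast; ring

theorem qlog_finite_sum_identity (q : ℝ) (hq0 : 0 < q) (hq1 : q < 1)
    (n : ℕ) (hn : 1 ≤ n) :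
    ∑ k ∈ Finset.Icc 1 n,
      (∏ j ∈ Finset.range k, (1 - q ^ (-(n : ℤ)) * q ^ j)) / (1 - q ^ k) * q ^ k
      = -(n : ℝ) := by
  have hq : q ≠ 0 := ne_of_gt hq0
  have hprod : ∀ k : ℕ,
      (∏ j ∈ Finset.range k, (1 - q ^ (-(n : ℤ)) * q ^ j)) = Fq q n k := by
    intro k
    rw [Fq]
    apply Finset.prod_congr rfl
    intro j _
    rw [show ((j : ℤ) - n) = ((j : ℕ) : ℤ) - ((n : ℕ) : ℤ) by push_cast; ring,
      zpow_sub₀ hq, zpow_natCast, zpow_natCast, zpow_neg, zpow_natCast]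
    ring
  calc ∑ k ∈ Finset.Icc 1 n,
        (∏ j ∈ Finset.range k, (1 - q ^ (-(n : ℤ)) * q ^ j)) / (1 - q ^ k) * q ^ k
      = ∑ k ∈ Finset.Icc 1 n, Fq q n k / (1 - q ^ k) * q ^ k := by
        exact Finset.sum_congr rfl fun k _ => by rw [hprod]
    _ = ∑ i ∈ Finset.range n, Fq q n (i + 1) / (1 - q ^ (i + 1)) * q ^ (i + 1) := by
        rw [show Finset.Icc 1 n = Finset.Ico 1 (n + 1) by rfl, Finset.sum_Ico_eq_sum_range]
        simp [add_comm]
    _ = -(n : ℝ) := qlog_range q hq0 hq1 n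
end

section
/- For every positive integer n: ∑_{k=1}^∞ q^{k(k+1)/2}(-1)^{k-1} q^{-nk}/((1-q^k)(q;q)_k) = n + ∑_{k=1}^∞ q^k/(1-q^k), where 0 < q < 1 and both series converge absolutely. -/
open Finset Filter Topology

namespace QlogAux

/-- partial q-Pochhammer product -/
noncomputable def P (q : ℝ) (k : ℕ) : ℝ := ∏ j ∈ Finset.range k, (1 - q ^ (j + 1))

lemma P_succ (q : ℝ) (k : ℕ) : P q (k + 1) = P q k * (1 - q ^ (k + 1)) := by
  simp [P, Finset.prod_range_succ]

lemma one_sub_pow_pos {q : ℝ} (hq0 : 0 < q) (hq1 : q < 1) (k : ℕ) : 0 < 1 - q ^ (k + 1) := by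
  have h : q ^ (k+1) < 1 := pow_lt_one₀ hq0.le hq1 (Nat.succ_ne_zero k)
  linarith

lemma P_pos {q : ℝ} (hq0 : 0 < q) (hq1 : q < 1) (k : ℕ) : 0 < P q k :=
  Finset.prod_pos fun j _ => one_sub_pow_pos hq0 hq1 j

lemma P_anti {q : ℝ} (hq0 : 0 < q) (hq1 : q < 1) {k m : ℕ} (h : k ≤ m) : P q m ≤ P q k := by
  induction m with
  | zero => simpa using (Nat.le_zero.mp h) ▸ le_refl (P q 0)
  | succ m ih =>
    rcases Nat.lt_or_ge k (m+1) with hk | hk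
    · have h1 := ih (Nat.lt_succ_iff.mp hk)
      have h2 : P q (m+1) ≤ P q m := by
        rw [P_succ]
        nlinarith [P_pos hq0 hq1 m, one_sub_pow_pos hq0 hq1 m, pow_pos hq0 (m+1)]
      linarith
    · have : k = m + 1 := le_antisymm h hk
      simp [this]

lemma P_le_one {q : ℝ} (hq0 : 0 < q) (hq1 : q < 1) (k : ℕ) : P q k ≤ 1 := by
  simpa [P] using P_anti hq0 hq1 (Nat.zero_le k)

/-- uniform positive lower bound for the partial products -/
lemma exists_P_lb {q : ℝ} (hq0 : 0 < q) (hq1 : q < 1) : ∃ C : ℝ, 0 < C ∧ ∀ k, C ≤ P q k := by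
  obtain ⟨N, hN⟩ : ∃ N : ℕ, q ^ (N + 1) ≤ (1 - q) / 2 := by
    have h := tendsto_pow_atTop_nhds_zero_of_lt_one hq0.le hq1
    have h2 : (0:ℝ) < (1 - q)/2 := by linarith
    obtain ⟨N, hN⟩ := (h.eventually (eventually_le_nhds h2)).exists_forall_of_atTop
    exact ⟨N, hN (N+1) (Nat.le_succ N)⟩
  refine ⟨P q N / 2, by have := P_pos hq0 hq1 N; linarith, fun k => ?_⟩
  rcases Nat.lt_or_ge k N with hk | hk
  · have h1 := P_anti hq0 hq1 hk.le
    have h2 := P_pos hq0 hq1 N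
    linarith
  · obtain ⟨t, rfl⟩ := Nat.exists_eq_add_of_le hk
    have key : ∀ t : ℕ, P q N * (1 - ∑ i ∈ Finset.range t, q ^ (N + 1 + i)) ≤ P q (N + t) := by
      intro t
      induction t with
      | zero => simp
      | succ t ih =>
        have hPN := P_pos hq0 hq1 N
        have hPNt := P_pos hq0 hq1 (N + t)
        have h1 : P q (N + (t+1)) = P q (N + t) * (1 - q ^ (N + t + 1)) := by
          rw [show N + (t+1) = (N + t) + 1 from rfl, P_succ]
        rw [h1, Finset.sum_range_succ]
        have hq1' := one_sub_pow_pos hq0 hq1 (N + t)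
        have hS : (0:ℝ) ≤ ∑ i ∈ Finset.range t, q ^ (N + 1 + i) :=
          Finset.sum_nonneg fun i _ => (pow_pos hq0 _).le
        have hpow : q ^ (N + 1 + t) = q ^ (N + t + 1) := by ring_nf
        rw [hpow]
        nlinarith [mul_le_mul_of_nonneg_right ih hq1'.le, pow_pos hq0 (N + t + 1),
          mul_nonneg (mul_nonneg hPN.le hS) (pow_pos hq0 (N + t + 1)).le]
    have hsum : ∑ i ∈ Finset.range t, q ^ (N + 1 + i) ≤ 1 / 2 := by
      have h1 : ∀ i ∈ Finset.range t, q ^ (N + 1 + i) = q ^ (N+1) * q ^ i := by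
        intro i _; rw [pow_add]
      rw [Finset.sum_congr rfl h1, ← Finset.mul_sum]
      have hgeom : ∑ i ∈ Finset.range t, q ^ i ≤ (1 - q)⁻¹ := by
        have hs : Summable (fun i : ℕ => q ^ i) := summable_geometric_of_lt_one hq0.le hq1
        calc ∑ i ∈ Finset.range t, q ^ i ≤ ∑' i : ℕ, q ^ i :=
              Summable.sum_le_tsum _ (fun i _ => (pow_pos hq0 i).le) hs
          _ = (1 - q)⁻¹ := tsum_geometric_of_lt_one hq0.le hq1
      have h1q : 0 < 1 - q := by linarith
      calc q ^ (N+1) * ∑ i ∈ Finset.range t, q ^ i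
          ≤ ((1 - q)/2) * (1-q)⁻¹ := by
            apply mul_le_mul hN hgeom (Finset.sum_nonneg fun i _ => (pow_pos hq0 i).le)
            linarith
        _ = 1/2 := by field_simp
    have h2 := key t
    have hPN := P_pos hq0 hq1 N
    have hmul : P q N * (1 - ∑ i ∈ Finset.range t, q ^ (N + 1 + i)) ≥ P q N * (1/2) := by
      apply mul_le_mul_of_nonneg_left _ hPN.le
      linarith
    linarith

lemma tri_succ (k : ℕ) : (k+1)*(k+2)/2 = k*(k+1)/2 + (k+1) := by
  have h2 : (k+1)*(k+2) = k*(k+1) + (k+1)*2 := by ring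
  rw [h2, Nat.add_mul_div_right _ _ (by norm_num : 0 < 2)]

/-- Euler series coefficients -/
noncomputable def c (q : ℝ) (k : ℕ) : ℝ := (-1:ℝ)^k * q^(k*(k+1)/2) / P q k

lemma c_zero (q : ℝ) : c q 0 = 1 := by simp [c, P]

lemma c_rec {q : ℝ} (hq0 : 0 < q) (hq1 : q < 1) (k : ℕ) :
    c q (k+1) = (c q (k+1) - c q k) * q^(k+1) := by
  have hP := (P_pos hq0 hq1 k).ne'
  have h1 := (one_sub_pow_pos hq0 hq1 k).ne'
  have htri : (k+1)*(k+2)/2 = k*(k+1)/2 + (k+1) := tri_succ k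
  unfold c
  rw [P_succ, htri, pow_add, pow_succ (-1:ℝ)]
  field_simp
  ring

lemma abs_c {q : ℝ} (hq0 : 0 < q) (hq1 : q < 1) (k : ℕ) :
    |c q k| = q^(k*(k+1)/2) / P q k := by
  rw [c, abs_div, abs_mul, abs_pow, abs_neg, abs_one, one_pow, one_mul,
    abs_of_pos (pow_pos hq0 _), abs_of_pos (P_pos hq0 hq1 k)]

lemma summable_tri {q : ℝ} (hq0 : 0 < q) (hq1 : q < 1) {y : ℝ} (hy : 0 < y) :
    Summable (fun k : ℕ => q ^ (k*(k+1)/2) * y ^ k) := by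
  apply summable_of_ratio_norm_eventually_le (r := 1/2) (by norm_num)
  have hq : Tendsto (fun k : ℕ => q ^ k * y) atTop (𝓝 0) := by
    simpa using (tendsto_pow_atTop_nhds_zero_of_lt_one hq0.le hq1).mul_const y
  have hev : ∀ᶠ k : ℕ in atTop, q ^ k * y ≤ 1/2 :=
    hq.eventually (eventually_le_nhds (by norm_num))
  filter_upwards [(tendsto_add_atTop_nat 1).eventually hev] with k hk'
  have hpos : (0:ℝ) < q ^ (k*(k+1)/2) * y ^ k := by positivity
  have heq : q ^ ((k+1)*(k+2)/2) * y ^ (k+1)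
      = (q ^ (k+1) * y) * (q ^ (k*(k+1)/2) * y ^ k) := by
    rw [tri_succ, pow_add, pow_succ]; ring
  rw [Real.norm_eq_abs, Real.norm_eq_abs, abs_of_pos (by positivity), abs_of_pos hpos, heq]
  exact mul_le_mul_of_nonneg_right hk' hpos.le

lemma summable_of_tri_bound {q : ℝ} (hq0 : 0 < q) (hq1 : q < 1) {f : ℕ → ℝ} {B y : ℝ}
    (hy : 0 < y) (h : ∀ k, |f k| ≤ B * (q^(k*(k+1)/2) * y^k)) : Summable f := by
  have h1 := (summable_tri hq0 hq1 hy).mul_left B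
  exact summable_abs_iff.mp (h1.of_nonneg_of_le (fun k => abs_nonneg _) h)

/-- key: bound for the shifted coefficients with the extra 1/(1-q^{k+1}) factor -/
lemma abs_main_bound {q : ℝ} (hq0 : 0 < q) (hq1 : q < 1) {C : ℝ} (hC : 0 < C)
    (hCP : ∀ k, C ≤ P q k) (x : ℝ) (k : ℕ) :
    |c q (k+1) * x^(k+1) / (1 - q^(k+1))| ≤
      ((|x|+1) / (C * (1-q))) * (q^(k*(k+1)/2) * (|x|+1)^k) := by
  have h1q : 0 < 1 - q := by linarith
  have hPk := P_pos hq0 hq1 (k+1)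
  have h1k := one_sub_pow_pos hq0 hq1 k
  have hy : (0:ℝ) < |x| + 1 := by positivity
  have hxle : |x| ≤ |x| + 1 := by linarith
  rw [abs_div, abs_mul, abs_c hq0 hq1, abs_of_pos h1k, abs_pow]
  have hnum : q^((k+1)*(k+2)/2) ≤ q^(k*(k+1)/2) * q^(k+1) := by
    rw [tri_succ, pow_add]
  have e1 : q^((k+1)*(k+2)/2) / P q (k+1) * |x|^(k+1) / (1 - q^(k+1))
      ≤ q^(k*(k+1)/2) * q^(k+1) / C * (|x|+1)^(k+1) / (1 - q) := by
    apply div_le_div₀ (by positivity) _ h1q (by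
      have : q^(k+1) ≤ q := by
        calc q^(k+1) = q * q^k := by rw [pow_succ]; ring
        _ ≤ q * 1 := by
            apply mul_le_mul_of_nonneg_left (pow_le_one₀ hq0.le hq1.le) hq0.le
        _ = q := mul_one q
      linarith)
    apply mul_le_mul _ (pow_le_pow_left₀ (abs_nonneg x) hxle _) (by positivity) (by positivity)
    apply div_le_div₀ (by positivity) hnum hC (hCP (k+1))
  calc q^((k+1)*(k+2)/2) / P q (k+1) * |x|^(k+1) / (1 - q^(k+1))
      ≤ q^(k*(k+1)/2) * q^(k+1) / C * (|x|+1)^(k+1) / (1 - q) := e1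
    _ = (q^(k*(k+1)/2) * q^(k+1) * (|x|+1)^(k+1)) / (C*(1-q)) := by
        field_simp
    _ ≤ (q^(k*(k+1)/2) * 1 * (|x|+1)^(k+1)) / (C*(1-q)) := by
        gcongr
        exact pow_le_one₀ hq0.le hq1.le
    _ = ((|x|+1) / (C * (1-q))) * (q^(k*(k+1)/2) * (|x|+1)^k) := by
        rw [pow_succ]; ring

-- new material
lemma summable_c_mul {q : ℝ} (hq0 : 0 < q) (hq1 : q < 1) (x : ℝ) :
    Summable (fun k : ℕ => c q k * x ^ k) := by
  obtain ⟨C, hC, hCP⟩ := exists_P_lb hq0 hq1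
  refine summable_of_tri_bound hq0 hq1 (y := |x| + 1) (B := C⁻¹) (by positivity) fun k => ?_
  rw [abs_mul, abs_c hq0 hq1, abs_pow]
  have h1 : q^(k*(k+1)/2) / P q k ≤ C⁻¹ * q^(k*(k+1)/2) := by
    rw [div_le_iff₀ (P_pos hq0 hq1 k)]
    have h2 : C⁻¹ * q^(k*(k+1)/2) * P q k = q^(k*(k+1)/2) * (P q k / C) := by
      field_simp
    rw [h2]
    have h3 : (1:ℝ) ≤ P q k / C := (one_le_div hC).mpr (hCP k)
    nlinarith [pow_pos hq0 (k*(k+1)/2)]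
  have h4 : |x|^k ≤ (|x|+1)^k := pow_le_pow_left₀ (abs_nonneg x) (by linarith) k
  calc q^(k*(k+1)/2) / P q k * |x|^k ≤ (C⁻¹ * q^(k*(k+1)/2)) * (|x|+1)^k := by
        apply mul_le_mul h1 h4 (by positivity) (by positivity)
    _ = C⁻¹ * (q^(k*(k+1)/2) * (|x|+1)^k) := by ring

lemma summable_c_shift {q : ℝ} (hq0 : 0 < q) (hq1 : q < 1) (x : ℝ) :
    Summable (fun k : ℕ => c q (k+1) * x ^ (k+1)) :=
  (summable_nat_add_iff 1).mpr (summable_c_mul hq0 hq1 x)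

lemma summable_main {q : ℝ} (hq0 : 0 < q) (hq1 : q < 1) (x : ℝ) :
    Summable (fun k : ℕ => c q (k+1) * x ^ (k+1) / (1 - q^(k+1))) := by
  obtain ⟨C, hC, hCP⟩ := exists_P_lb hq0 hq1
  exact summable_of_tri_bound hq0 hq1 (y := |x|+1) (by positivity)
    (abs_main_bound hq0 hq1 hC hCP x)

/-- the Euler series -/
noncomputable def E (q x : ℝ) : ℝ := ∑' k : ℕ, c q k * x ^ k

lemma E_eq (q : ℝ) (hq0 : 0 < q) (hq1 : q < 1) (x : ℝ) :
    E q x = 1 + ∑' k : ℕ, c q (k+1) * x ^ (k+1) := by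
  rw [E, Summable.tsum_eq_zero_add (summable_c_mul hq0 hq1 x), c_zero]
  norm_num

lemma E_funeq {q : ℝ} (hq0 : 0 < q) (hq1 : q < 1) (x : ℝ) :
    E q x = (1 - q * x) * E q (q * x) := by
  have h1 : ∀ k : ℕ, c q (k+1) * x^(k+1)
      = c q (k+1) * (q*x)^(k+1) - c q k * (q*x)^(k+1) := by
    intro k
    have := c_rec hq0 hq1 k
    calc c q (k+1) * x^(k+1) = ((c q (k+1) - c q k) * q^(k+1)) * x^(k+1) := by rw [← this]
      _ = c q (k+1) * (q*x)^(k+1) - c q k * (q*x)^(k+1) := by rw [mul_pow]; ring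
  have hs1 := summable_c_shift hq0 hq1 (q*x)
  have hs2 : Summable (fun k : ℕ => c q k * (q*x)^(k+1)) := by
    have := (summable_c_mul hq0 hq1 (q*x)).mul_right (q*x)
    refine this.congr fun k => ?_
    rw [pow_succ]; ring
  calc E q x = 1 + ∑' k : ℕ, c q (k+1) * x ^ (k+1) := E_eq q hq0 hq1 x
    _ = 1 + ∑' k : ℕ, (c q (k+1) * (q*x)^(k+1) - c q k * (q*x)^(k+1)) := by
        rw [tsum_congr h1]
    _ = 1 + (∑' k : ℕ, c q (k+1) * (q*x)^(k+1) - ∑' k : ℕ, c q k * (q*x)^(k+1)) := by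
        rw [Summable.tsum_sub hs1 hs2]
    _ = (1 + ∑' k : ℕ, c q (k+1) * (q*x)^(k+1)) - (q*x) * ∑' k : ℕ, c q k * (q*x)^k := by
        rw [← tsum_mul_left]
        have : ∀ k : ℕ, (q*x) * (c q k * (q*x)^k) = c q k * (q*x)^(k+1) := by
          intro k; rw [pow_succ]; ring
        rw [tsum_congr this]; ring
    _ = E q (q*x) - (q*x) * E q (q*x) := by rw [← E_eq q hq0 hq1 (q*x), E]
    _ = (1 - q * x) * E q (q * x) := by ring

lemma E_zpow_neg_zero {q : ℝ} (hq0 : 0 < q) (hq1 : q < 1) :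
    ∀ m : ℕ, 1 ≤ m → E q (q ^ (-(m:ℤ))) = 0 := by
  intro m hm
  have hq := hq0.ne'
  induction m with
  | zero => omega
  | succ m ih =>
    rcases Nat.eq_zero_or_pos m with rfl | hm'
    · have h := E_funeq hq0 hq1 (q ^ (-(1:ℤ)))
      have h2 : q * q ^ (-(1:ℤ)) = 1 := by
        rw [zpow_neg, zpow_one]; field_simp
      have h3 : (-(((0:ℕ)+1 : ℕ):ℤ)) = -(1:ℤ) := by norm_num
      rw [h3, h, h2]; ring
    · have hkey : q * q ^ (-((m:ℤ)+1)) = q ^ (-(m:ℤ)) := by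
        calc q * q^(-((m:ℤ)+1)) = q^(1:ℤ) * q^(-((m:ℤ)+1)) := by rw [zpow_one]
          _ = q^((1:ℤ) + (-((m:ℤ)+1))) := (zpow_add₀ hq _ _).symm
          _ = q^(-(m:ℤ)) := by norm_num
      have h := E_funeq hq0 hq1 (q ^ (-((m:ℤ)+1)))
      have h4 : (-(((m:ℕ)+1 : ℕ):ℤ)) = -((m:ℤ)+1) := by push_cast; ring
      rw [h4, h, hkey, ih hm']
      ring

/-- real-valued Gaussian binomial -/
noncomputable def gb (q : ℝ) (n k : ℕ) : ℝ :=
  if k ≤ n then P q n / (P q k * P q (n - k)) else 0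

lemma P_zero (q : ℝ) : P q 0 = 1 := by simp [P]

lemma gb_zero {q : ℝ} (hq0 : 0 < q) (hq1 : q < 1) (n : ℕ) : gb q n 0 = 1 := by
  have h := (P_pos hq0 hq1 n).ne'
  rw [gb, if_pos (Nat.zero_le n), Nat.sub_zero, P_zero, one_mul, div_self h]

lemma gb_self {q : ℝ} (hq0 : 0 < q) (hq1 : q < 1) (n : ℕ) : gb q n n = 1 := by
  have := (P_pos hq0 hq1 n).ne'
  rw [gb, if_pos (le_refl n), Nat.sub_self, P_zero, mul_one, div_self this]

lemma gb_of_gt {q : ℝ} {n k : ℕ} (h : n < k) : gb q n k = 0 := by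
  simp [gb, Nat.not_le.mpr h]

lemma gb_pascal {q : ℝ} (hq0 : 0 < q) (hq1 : q < 1) {n k : ℕ} (hk : k ≤ n) :
    gb q (n+1) (k+1) = gb q n (k+1) + q^(n-k) * gb q n k := by
  rcases Nat.eq_or_lt_of_le hk with rfl | hlt
  · rw [gb_self hq0 hq1, gb_of_gt (Nat.lt_succ_self k), gb_self hq0 hq1,
      Nat.sub_self]
    norm_num
  · -- k < n, write n = k + 1 + a
    obtain ⟨a, rfl⟩ : ∃ a, n = k + 1 + a := ⟨n - (k+1), by omega⟩
    have e1 : k + 1 + a + 1 - (k + 1) = a + 1 := by omega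
    have e2 : k + 1 + a - (k + 1) = a := by omega
    have e3 : k + 1 + a - k = a + 1 := by omega
    rw [gb, gb, gb, if_pos (by omega : k + 1 ≤ k + 1 + a + 1),
      if_pos (by omega : k + 1 ≤ k + 1 + a), if_pos (by omega : k ≤ k + 1 + a),
      e1, e2, e3]
    have hPk := (P_pos hq0 hq1 k).ne'
    have hPa := (P_pos hq0 hq1 a).ne'
    have h1k := (one_sub_pow_pos hq0 hq1 k).ne'
    have h1a := (one_sub_pow_pos hq0 hq1 a).ne'
    have hPn := (P_pos hq0 hq1 (k+1+a)).ne'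
    rw [show k + 1 + a + 1 = (k+1+a) + 1 from rfl, P_succ q (k+1+a), P_succ q a, P_succ q k]
    field_simp
    ring

/-- partial fraction sum -/
noncomputable def S (q : ℝ) (n : ℕ) (z : ℝ) : ℝ :=
  ∑ k ∈ Finset.range (n+1), (-1:ℝ)^k * gb q n k * q^(k*(k+1)/2) / (1 - z * q^k)

lemma one_sub_z_pow_pos {q z : ℝ} (hq0 : 0 < q) (hq1 : q < 1) (hz0 : 0 < z) (hz1 : z < 1)
    (j : ℕ) : 0 < 1 - z * q ^ j := by
  have h1 : q ^ j ≤ 1 := pow_le_one₀ hq0.le hq1.le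
  have h2 : 0 < q ^ j := pow_pos hq0 j
  nlinarith

lemma prodD_pos {q z : ℝ} (hq0 : 0 < q) (hq1 : q < 1) (hz0 : 0 < z) (hz1 : z < 1) (m : ℕ) :
    0 < ∏ j ∈ Finset.range m, (1 - z * q ^ j) :=
  Finset.prod_pos fun j _ => one_sub_z_pow_pos hq0 hq1 hz0 hz1 j

lemma S_closed {q : ℝ} (hq0 : 0 < q) (hq1 : q < 1) :
    ∀ n : ℕ, ∀ z : ℝ, 0 < z → z < 1 →
      S q n z = P q n / ∏ j ∈ Finset.range (n+1), (1 - z * q ^ j) := by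
  intro n
  induction n with
  | zero =>
    intro z hz0 hz1
    simp [S, gb_zero hq0 hq1, P_zero]
  | succ n ih =>
    intro z hz0 hz1
    have hzq0 : 0 < z * q := by positivity
    have hzq1 : z * q < 1 := by nlinarith
    have ihz := ih z hz0 hz1
    have ihzq := ih (z*q) hzq0 hzq1
    -- notation
    set D : ℝ := ∏ j ∈ Finset.range (n+1), (1 - z * q ^ j) with hD
    have hDpos : 0 < D := prodD_pos hq0 hq1 hz0 hz1 (n+1)
    set D' : ℝ := ∏ j ∈ Finset.range (n+1), (1 - (z*q) * q ^ j) with hD'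
    have hD'pos : 0 < D' := prodD_pos hq0 hq1 hzq0 hzq1 (n+1)
    have hfull : ∏ j ∈ Finset.range (n+2), (1 - z * q ^ j) = D * (1 - z * q^(n+1)) := by
      rw [Finset.prod_range_succ]
    have hfull' : ∏ j ∈ Finset.range (n+2), (1 - z * q ^ j) = D' * (1 - z) := by
      rw [Finset.prod_range_succ']
      congr 1
      · apply Finset.prod_congr rfl
        intro j _
        rw [pow_succ]
        ring
      · simp
    -- decompose S (n+1) z
    have hsplit : S q (n+1) z = S q n z - q^(n+1) * S q n (z*q) := by
      rw [S, Finset.sum_range_succ']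
      have hgb0 : (-1:ℝ)^0 * gb q (n+1) 0 * q^(0*(0+1)/2) / (1 - z * q^0) = 1/(1-z) := by
        rw [gb_zero hq0 hq1]; norm_num
      rw [hgb0]
      have hterm : ∀ k ∈ Finset.range (n+1),
          (-1:ℝ)^(k+1) * gb q (n+1) (k+1) * q^((k+1)*(k+2)/2) / (1 - z * q^(k+1))
          = (-1:ℝ)^(k+1) * gb q n (k+1) * q^((k+1)*(k+2)/2) / (1 - z * q^(k+1))
            - q^(n+1) * ((-1:ℝ)^k * gb q n k * q^(k*(k+1)/2) / (1 - (z*q) * q^k)) := by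
        intro k hk
        have hkn : k ≤ n := Nat.lt_succ_iff.mp (Finset.mem_range.mp hk)
        rw [gb_pascal hq0 hq1 hkn]
        have hden : 1 - z * q^(k+1) = 1 - (z*q) * q^k := by rw [pow_succ]; ring
        rw [hden]
        have hexp : q^((k+1)*(k+2)/2) = q^(k*(k+1)/2) * q^(k+1) := by
          rw [tri_succ, pow_add]
        have hnk : q^(n-k) = q^(n+1) / q^(k+1) := by
          rw [eq_div_iff (pow_ne_zero _ hq0.ne'), ← pow_add]
          congr 1
          omega
        rw [hexp, hnk, pow_succ (-1:ℝ) k]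
        have hd1 : (1 - (z*q) * q^k) ≠ 0 := (one_sub_z_pow_pos hq0 hq1 hzq0 hzq1 k).ne'
        field_simp
        ring
      rw [Finset.sum_congr rfl hterm, Finset.sum_sub_distrib, ← Finset.mul_sum]
      have hdrop : ∑ k ∈ Finset.range (n+1),
          (-1:ℝ)^(k+1) * gb q n (k+1) * q^((k+1)*(k+2)/2) / (1 - z * q^(k+1))
          = ∑ k ∈ Finset.range n,
          (-1:ℝ)^(k+1) * gb q n (k+1) * q^((k+1)*(k+2)/2) / (1 - z * q^(k+1)) := by
        rw [Finset.sum_range_succ, gb_of_gt (Nat.lt_succ_self n)]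
        norm_num
      rw [hdrop]
      have hSn : S q n z = (∑ k ∈ Finset.range n,
          (-1:ℝ)^(k+1) * gb q n (k+1) * q^((k+1)*(k+2)/2) / (1 - z * q^(k+1))) + 1/(1-z) := by
        rw [S, Finset.sum_range_succ']
        congr 1
        rw [gb_zero hq0 hq1]
        norm_num
      rw [hSn, S]
      ring
    -- now use the closed forms
    rw [hsplit, ihz, ihzq, hfull]
    have h1z : (1:ℝ) - z ≠ 0 := by linarith
    have hDfull : D' = D * (1 - z * q^(n+1)) / (1 - z) := by
      rw [eq_div_iff h1z, ← hfull, hfull']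
    have hPn1 : P q (n+1) = P q n * (1 - q^(n+1)) := P_succ q n
    rw [hDfull, hPn1]
    have h1 : (1:ℝ) - z * q^(n+1) ≠ 0 := (one_sub_z_pow_pos hq0 hq1 hz0 hz1 (n+1)).ne'
    have h1' : (1:ℝ) - q * q ^ n * z ≠ 0 := by convert h1 using 1; ring
    field_simp
    have hX : (1 - q * q ^ n * z)⁻¹ * (1 - q * q ^ n * z) = 1 := inv_mul_cancel₀ h1'
    linear_combination (-(P q n)) * hX


/-- finite Van Hamme / Uchimura identity -/
lemma T_eq {q : ℝ} (hq0 : 0 < q) (hq1 : q < 1) :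
    ∀ n : ℕ, ∑ k ∈ Finset.range n,
        (-1:ℝ)^k * gb q n (k+1) * q^((k+1)*(k+2)/2) / (1 - q^(k+1))
      = ∑ k ∈ Finset.range n, q^(k+1) / (1 - q^(k+1)) := by
  intro n
  induction n with
  | zero => simp
  | succ n ih =>
    have hterm : ∀ k ∈ Finset.range (n+1),
        (-1:ℝ)^k * gb q (n+1) (k+1) * q^((k+1)*(k+2)/2) / (1 - q^(k+1))
        = (-1:ℝ)^k * gb q n (k+1) * q^((k+1)*(k+2)/2) / (1 - q^(k+1))
          + q^(n+1) * ((-1:ℝ)^k * gb q n k * q^(k*(k+1)/2) / (1 - q * q^k)) := by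
      intro k hk
      have hkn : k ≤ n := Nat.lt_succ_iff.mp (Finset.mem_range.mp hk)
      rw [gb_pascal hq0 hq1 hkn]
      have hden : (1:ℝ) - q^(k+1) = 1 - q * q^k := by rw [pow_succ]; ring
      have hd : ((1:ℝ) - q^(k+1)) ≠ 0 := (one_sub_pow_pos hq0 hq1 k).ne'
      have hexp : q^((k+1)*(k+2)/2) = q^(k*(k+1)/2) * q^(k+1) := by
        rw [tri_succ, pow_add]
      have hnk : q^(n-k) = q^(n+1) / q^(k+1) := by
        rw [eq_div_iff (pow_ne_zero _ hq0.ne'), ← pow_add]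
        congr 1
        omega
      rw [← hden, hexp, hnk]
      field_simp
    rw [Finset.sum_congr rfl hterm, Finset.sum_add_distrib, ← Finset.mul_sum]
    have hdrop : ∑ k ∈ Finset.range (n+1),
        (-1:ℝ)^k * gb q n (k+1) * q^((k+1)*(k+2)/2) / (1 - q^(k+1))
        = ∑ k ∈ Finset.range n,
        (-1:ℝ)^k * gb q n (k+1) * q^((k+1)*(k+2)/2) / (1 - q^(k+1)) := by
      rw [Finset.sum_range_succ, gb_of_gt (Nat.lt_succ_self n)]
      norm_num
    have hS : ∑ k ∈ Finset.range (n+1),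
        (-1:ℝ)^k * gb q n k * q^(k*(k+1)/2) / (1 - q * q^k) = S q n q := by
      rw [S]
    have hq1' : q * 1 < 1 := by linarith [mul_one q]
    have hSval : S q n q = 1 / (1 - q^(n+1)) := by
      rw [S_closed hq0 hq1 n q hq0 hq1]
      have hprod : ∏ j ∈ Finset.range (n+1), (1 - q * q ^ j) = P q (n+1) := by
        rw [P]
        apply Finset.prod_congr rfl
        intro j _
        rw [pow_succ]
        ring
      rw [hprod, P_succ]
      have hPn := (P_pos hq0 hq1 n).ne'
      have h1 := (one_sub_pow_pos hq0 hq1 n).ne'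
      field_simp
    rw [hdrop, ih, hS, hSval, Finset.sum_range_succ]
    ring

lemma gb_nonneg {q : ℝ} (hq0 : 0 < q) (hq1 : q < 1) (n k : ℕ) : 0 ≤ gb q n k := by
  rw [gb]
  split
  · exact div_nonneg (P_pos hq0 hq1 n).le
      (mul_nonneg (P_pos hq0 hq1 k).le (P_pos hq0 hq1 (n-k)).le)
  · exact le_refl 0

lemma gb_le {q : ℝ} (hq0 : 0 < q) (hq1 : q < 1) (n k : ℕ) : gb q n k ≤ 1 / P q k := by
  have hPk := P_pos hq0 hq1 k
  rw [gb]
  split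
  · next h =>
    have h1 : P q n ≤ P q (n - k) := P_anti hq0 hq1 (Nat.sub_le n k)
    have h2 := P_pos hq0 hq1 (n - k)
    rw [div_le_div_iff₀ (mul_pos hPk h2) hPk]
    nlinarith
  · positivity

/-- P m - P (m+t) ≤ t q^(m+1) -/
lemma P_diff_le {q : ℝ} (hq0 : 0 < q) (hq1 : q < 1) (m : ℕ) :
    ∀ t : ℕ, P q m - P q (m + t) ≤ t * q^(m+1) := by
  intro t
  induction t with
  | zero => simp
  | succ t ih =>
    have h1 : P q (m + (t+1)) = P q (m+t) * (1 - q^(m+t+1)) := by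
      rw [show m + (t+1) = (m+t)+1 from rfl, P_succ]
    have h2 : q^(m+t+1) ≤ q^(m+1) := by
      exact pow_le_pow_of_le_one hq0.le hq1.le (by omega)
    have h3 : 0 < P q (m+t) := P_pos hq0 hq1 (m+t)
    have h4 : P q (m+t) ≤ 1 := P_le_one hq0 hq1 (m+t)
    have h5 : 0 < q^(m+t+1) := pow_pos hq0 _
    rw [h1]
    push_cast
    nlinarith

lemma tendsto_gb {q : ℝ} (hq0 : 0 < q) (hq1 : q < 1) (k : ℕ) :
    Tendsto (fun n : ℕ => gb q n (k+1)) atTop (𝓝 (1 / P q (k+1))) := by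
  obtain ⟨C, hC, hCP⟩ := exists_P_lb hq0 hq1
  have hPk := P_pos hq0 hq1 (k+1)
  -- squeeze
  have hub : ∀ n, gb q n (k+1) ≤ 1 / P q (k+1) := fun n => gb_le hq0 hq1 n (k+1)
  have hlb : ∀ n : ℕ, n ≥ k + 1 →
      1 / P q (k+1) - (k+1) * q^(n-k) / (P q (k+1) * C) ≤ gb q n (k+1) := by
    intro n hn
    have hm : n - (k+1) + (k+1) = n := by omega
    have hdiff : P q (n-(k+1)) - P q n ≤ (k+1) * q^(n-k) := by
      have := P_diff_le hq0 hq1 (n-(k+1)) (k+1)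
      rw [hm] at this
      have he : n - (k+1) + 1 = n - k := by omega
      rw [he] at this
      exact_mod_cast this
    rw [gb, if_pos (by omega : k + 1 ≤ n)]
    set Pm := P q (n - (k+1)) with hPmdef
    have hPm : 0 < Pm := P_pos hq0 hq1 (n - (k+1))
    have hPmn : P q n ≤ Pm := by
      rw [hPmdef]
      exact P_anti hq0 hq1 (Nat.sub_le n (k+1))
    have e : 1/P q (k+1) - P q n/(P q (k+1) * Pm) = (Pm - P q n)/(P q (k+1)*Pm) := by
      field_simp
    have hCle : C ≤ Pm := hCP (n - (k+1))
    have key : (Pm - P q n)/(P q (k+1)*Pm) ≤ ((k+1)*q^(n-k))/(P q (k+1)*C) := by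
      rw [div_le_div_iff₀ (mul_pos hPk hPm) (mul_pos hPk hC)]
      have hstep : (Pm - P q n) * C ≤ ((k+1)*q^(n-k)) * Pm := by
        apply mul_le_mul hdiff hCle hC.le
        positivity
      nlinarith [mul_le_mul_of_nonneg_left hstep hPk.le]
    have := e ▸ key
    linarith
  have htendlb : Tendsto (fun n : ℕ => 1 / P q (k+1) - (k+1) * q^(n-k) / (P q (k+1) * C))
      atTop (𝓝 (1 / P q (k+1))) := by
    have h0 : Tendsto (fun n : ℕ => q ^ (n - k)) atTop (𝓝 0) := by
      have := tendsto_pow_atTop_nhds_zero_of_lt_one hq0.le hq1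
      exact this.comp (tendsto_sub_atTop_nat k)
    have := ((h0.const_mul ((k:ℝ)+1)).div_const (P q (k+1) * C)).const_sub (1 / P q (k+1))
    simpa using this
  apply tendsto_of_tendsto_of_tendsto_of_le_of_le' htendlb tendsto_const_nhds
  · filter_upwards [eventually_ge_atTop (k+1)] with n hn
    exact hlb n hn
  · filter_upwards with n
    exact hub n
-- main sequence of sums
noncomputable def L (q : ℝ) (n : ℕ) : ℝ :=
  ∑' k : ℕ, -(c q (k+1)) * (q ^ (-(n:ℤ)))^(k+1) / (1 - q^(k+1))

lemma summable_u {q : ℝ} (hq0 : 0 < q) (hq1 : q < 1) (x : ℝ) :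
    Summable (fun k : ℕ => -(c q (k+1)) * x^(k+1) / (1 - q^(k+1))) := by
  refine (summable_main hq0 hq1 x).neg.congr fun k => ?_
  ring

lemma summable_B {q : ℝ} (hq0 : 0 < q) (hq1 : q < 1) :
    Summable (fun k : ℕ => q^(k+1) / (1 - q^(k+1))) := by
  have h1q : 0 < 1 - q := by linarith
  have hgsum : Summable (fun k : ℕ => (q/(1-q)) * q^k) :=
    (summable_geometric_of_lt_one hq0.le hq1).mul_left _
  have hle : ∀ k : ℕ, q^(k+1)/(1-q^(k+1)) ≤ (q/(1-q)) * q^k := by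
    intro k
    rw [div_le_iff₀ (one_sub_pow_pos hq0 hq1 k)]
    have h2 : 1 - q ≤ 1 - q^(k+1) := by
      have : q^(k+1) ≤ q := by
        calc q^(k+1) = q * q^k := by rw [pow_succ]; ring
          _ ≤ q * 1 := mul_le_mul_of_nonneg_left (pow_le_one₀ hq0.le hq1.le) hq0.le
          _ = q := mul_one q
      linarith
    have e : q / (1-q) * q^k * (1 - q^(k+1)) = q^(k+1) * ((1 - q^(k+1))/(1-q)) := by
      rw [pow_succ]
      ring
    rw [e]
    have h3 : (1:ℝ) ≤ (1 - q^(k+1))/(1-q) := (one_le_div h1q).mpr h2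
    nlinarith [pow_pos hq0 (k+1)]
  exact Summable.of_nonneg_of_le
    (fun k => div_nonneg (pow_pos hq0 (k+1)).le (one_sub_pow_pos hq0 hq1 k).le) hle hgsum

/-- the Uchimura base case: L 0 equals the divisor-type sum -/
lemma L_zero {q : ℝ} (hq0 : 0 < q) (hq1 : q < 1) :
    L q 0 = ∑' k : ℕ, q^(k+1) / (1 - q^(k+1)) := by
  obtain ⟨C, hC, hCP⟩ := exists_P_lb hq0 hq1
  have h1q : 0 < 1 - q := by linarith
  -- define approximating family
  set f : ℕ → ℕ → ℝ := fun n k =>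
    if k < n then (-1:ℝ)^k * gb q n (k+1) * q^((k+1)*(k+2)/2) / (1 - q^(k+1)) else 0 with hf
  set g : ℕ → ℝ := fun k => -(c q (k+1)) * (1:ℝ)^(k+1) / (1 - q^(k+1)) with hg
  have hbound : Summable (fun k : ℕ => (1/(C*(1-q))) * q^((k+1)*(k+2)/2)) := by
    apply Summable.mul_left
    have h := summable_tri hq0 hq1 (y := 1) one_pos
    have h2 := (summable_nat_add_iff 1).mpr h
    refine h2.congr fun k => ?_
    simp
  -- pointwise limit
  have hab : ∀ k : ℕ, Tendsto (fun n => f n k) atTop (𝓝 (g k)) := by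
    intro k
    have h1 : Tendsto (fun n : ℕ => gb q n (k+1)) atTop (𝓝 (1 / P q (k+1))) :=
      tendsto_gb hq0 hq1 k
    have h2 := h1.const_mul ((-1:ℝ)^k * q^((k+1)*(k+2)/2) / (1 - q^(k+1)))
    have hPk := (P_pos hq0 hq1 (k+1)).ne'
    have h1k := (one_sub_pow_pos hq0 hq1 k).ne'
    have hval : g k = ((-1:ℝ)^k * q^((k+1)*(k+2)/2) / (1 - q^(k+1))) * (1 / P q (k+1)) := by
      simp only [hg, c]
      rw [pow_succ (-1:ℝ) k]
      have hexp : (k+1)*((k+1)+1)/2 = (k+1)*(k+2)/2 := by norm_num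
      rw [hexp]
      field_simp
      ring
    rw [hval]
    refine Tendsto.congr' ?_ h2
    filter_upwards [eventually_gt_atTop k] with n hn
    simp only [hf, if_pos hn]
    ring
  -- uniform bound
  have h_bound : ∀ᶠ n in atTop, ∀ k, ‖f n k‖ ≤ (1/(C*(1-q))) * q^((k+1)*(k+2)/2) := by
    filter_upwards with n k
    simp only [hf]
    split
    · rw [Real.norm_eq_abs, abs_div, abs_mul, abs_mul, abs_pow, abs_neg, abs_one, one_pow,
        one_mul, abs_of_nonneg (gb_nonneg hq0 hq1 n (k+1)), abs_of_pos (pow_pos hq0 _),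
        abs_of_pos (one_sub_pow_pos hq0 hq1 k)]
      have hgb : gb q n (k+1) ≤ 1/C := by
        calc gb q n (k+1) ≤ 1 / P q (k+1) := gb_le hq0 hq1 n (k+1)
          _ ≤ 1 / C := by
            apply one_div_le_one_div_of_le hC (hCP (k+1))
      have hden : 1 - q ≤ 1 - q^(k+1) := by
        have : q^(k+1) ≤ q := by
          calc q^(k+1) = q * q^k := by rw [pow_succ]; ring
            _ ≤ q * 1 := mul_le_mul_of_nonneg_left (pow_le_one₀ hq0.le hq1.le) hq0.le
            _ = q := mul_one q
        linarith
      calc gb q n (k+1) * q^((k+1)*(k+2)/2) / (1 - q^(k+1))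
          ≤ (1/C) * q^((k+1)*(k+2)/2) / (1 - q) := by
            apply div_le_div₀ (by positivity) _ h1q hden
            apply mul_le_mul_of_nonneg_right hgb (pow_pos hq0 _).le
        _ = (1/(C*(1-q))) * q^((k+1)*(k+2)/2) := by field_simp
    · simp only [norm_zero]
      positivity
  have hT := tendsto_tsum_of_dominated_convergence hbound hab h_bound
  -- identify the two limits
  have hfin : ∀ n : ℕ, ∑' k, f n k = ∑ k ∈ Finset.range n, q^(k+1)/(1-q^(k+1)) := by
    intro n
    rw [← T_eq hq0 hq1 n]
    rw [tsum_eq_sum (s := Finset.range n) (fun k hk => by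
      simp only [hf]; simp only [Finset.mem_range] at hk; simp [if_neg hk])]
    apply Finset.sum_congr rfl
    intro k hk
    simp only [hf]
    simp only [Finset.mem_range] at hk
    simp [if_pos hk]
  rw [show (fun n => ∑' k, f n k) = (fun n => ∑ k ∈ Finset.range n, q^(k+1)/(1-q^(k+1)))
    from funext hfin] at hT
  have hB := (summable_B hq0 hq1).hasSum.tendsto_sum_nat
  have huniq := tendsto_nhds_unique hT hB
  rw [L, ← huniq]
  apply tsum_congr
  intro k
  simp only [hg]
  norm_num


lemma tsum_w {q : ℝ} (hq0 : 0 < q) (hq1 : q < 1) {m : ℕ} (hm : 1 ≤ m) :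
    ∑' k : ℕ, -(c q (k+1)) * (q ^ (-(m:ℤ)))^(k+1) = 1 := by
  have hE := E_eq q hq0 hq1 (q ^ (-(m:ℤ)))
  have hz := E_zpow_neg_zero hq0 hq1 m hm
  rw [hz] at hE
  have hsum : ∑' k : ℕ, c q (k+1) * (q ^ (-(m:ℤ)))^(k+1) = -1 := by linarith
  calc ∑' k : ℕ, -(c q (k+1)) * (q ^ (-(m:ℤ)))^(k+1)
      = ∑' k : ℕ, -(c q (k+1) * (q ^ (-(m:ℤ)))^(k+1)) := by
        apply tsum_congr; intro k; ring
    _ = -∑' k : ℕ, c q (k+1) * (q ^ (-(m:ℤ)))^(k+1) := tsum_neg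
    _ = 1 := by rw [hsum]; norm_num

lemma L_succ {q : ℝ} (hq0 : 0 < q) (hq1 : q < 1) (n : ℕ) :
    L q (n+1) = L q n + 1 := by
  have hq := hq0.ne'
  set x : ℝ := q ^ (-(((n+1):ℕ):ℤ)) with hxdef
  have e : q ^ (-(n:ℤ)) = x * q := by
    rw [hxdef, ← zpow_add_one₀ hq (-(((n+1):ℕ):ℤ))]
    congr 1
    push_cast
    ring
  have hterm : ∀ k : ℕ, -(c q (k+1)) * x^(k+1) / (1 - q^(k+1))
      = -(c q (k+1)) * (q ^ (-(n:ℤ)))^(k+1) / (1 - q^(k+1)) + -(c q (k+1)) * x^(k+1) := by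
    intro k
    rw [e, mul_pow]
    have h1 := (one_sub_pow_pos hq0 hq1 k).ne'
    field_simp
    ring
  have hs1 := summable_u hq0 hq1 (q ^ (-(n:ℤ)))
  have hs2 : Summable (fun k : ℕ => -(c q (k+1)) * x^(k+1)) :=
    (summable_c_shift hq0 hq1 x).neg.congr (fun k => by ring)
  calc L q (n+1) = ∑' k : ℕ, -(c q (k+1)) * x^(k+1) / (1 - q^(k+1)) := rfl
    _ = ∑' k : ℕ, (-(c q (k+1)) * (q ^ (-(n:ℤ)))^(k+1) / (1 - q^(k+1))
          + -(c q (k+1)) * x^(k+1)) := tsum_congr hterm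
    _ = (∑' k : ℕ, -(c q (k+1)) * (q ^ (-(n:ℤ)))^(k+1) / (1 - q^(k+1)))
          + ∑' k : ℕ, -(c q (k+1)) * x^(k+1) := Summable.tsum_add hs1 hs2
    _ = L q n + 1 := by
        rw [tsum_w hq0 hq1 (Nat.le_add_left 1 n)]
        rfl

lemma L_formula {q : ℝ} (hq0 : 0 < q) (hq1 : q < 1) (n : ℕ) :
    L q n = n + ∑' k : ℕ, q^(k+1) / (1 - q^(k+1)) := by
  induction n with
  | zero => rw [L_zero hq0 hq1]; norm_num
  | succ n ih =>
    rw [L_succ hq0 hq1 n, ih]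
    push_cast
    ring


end QlogAux

open QlogAux in
theorem qlog_alternating_series_identity (q : ℝ) (hq0 : 0 < q) (hq1 : q < 1)
    (n : ℕ) (hn : 1 ≤ n) :
    Summable (fun k : ℕ =>
      |q ^ ((k + 1) * (k + 2) / 2) * (-1 : ℝ) ^ k * q ^ (-(n : ℤ) * (k + 1)) /
        ((1 - q ^ (k + 1)) * ∏ j ∈ Finset.range (k + 1), (1 - q ^ (j + 1)))|) ∧
    Summable (fun k : ℕ => |q ^ (k + 1) / (1 - q ^ (k + 1))|) ∧
    ∑' k : ℕ, q ^ ((k + 1) * (k + 2) / 2) * (-1 : ℝ) ^ k * q ^ (-(n : ℤ) * (k + 1)) /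
        ((1 - q ^ (k + 1)) * ∏ j ∈ Finset.range (k + 1), (1 - q ^ (j + 1)))
      = n + ∑' k : ℕ, q ^ (k + 1) / (1 - q ^ (k + 1)) := by
  have hstmt : ∀ k : ℕ,
      q ^ ((k + 1) * (k + 2) / 2) * (-1 : ℝ) ^ k * q ^ (-(n : ℤ) * (k + 1)) /
        ((1 - q ^ (k + 1)) * ∏ j ∈ Finset.range (k + 1), (1 - q ^ (j + 1)))
      = -(c q (k+1)) * (q ^ (-(n:ℤ)))^(k+1) / (1 - q^(k+1)) := by
    intro k
    have hprod : ∏ j ∈ Finset.range (k+1), (1 - q^(j+1)) = P q (k+1) := rfl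
    have hzp : (q:ℝ) ^ (-(n : ℤ) * ((k:ℤ) + 1)) = (q ^ (-(n:ℤ)))^(k+1) := by
      rw [zpow_mul]
      have h2 : ((k:ℤ)+1) = (((k+1:ℕ)):ℤ) := by push_cast; ring
      rw [h2, zpow_natCast]
    have hc : -(c q (k+1)) = (-1:ℝ)^k * q^((k+1)*(k+2)/2) / P q (k+1) := by
      rw [c, pow_succ (-1:ℝ) k]
      have hexp : (k+1)*((k+1)+1)/2 = (k+1)*(k+2)/2 := by norm_num
      rw [hexp]
      field_simp
    rw [hprod, hzp, hc]
    have hPk := (P_pos hq0 hq1 (k+1)).ne'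
    have h1k := (one_sub_pow_pos hq0 hq1 k).ne'
    field_simp
  refine ⟨?_, ?_, ?_⟩
  · have hs := summable_abs_iff.mpr (summable_u hq0 hq1 (q ^ (-(n:ℤ))))
    refine hs.congr fun k => ?_
    rw [hstmt k]
  · exact summable_abs_iff.mpr (summable_B hq0 hq1)
  · rw [tsum_congr hstmt]
    exact L_formula hq0 hq1 n
end
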